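/- arXiv:2107.00958 — 9 statements merged into one kernel-verified Lean document; each statement's English description precedes it below -/
import Mathlib

section
/- Let n ≥ 2 be an integer, a > 1/n a real number, l = (na-1)/(n²-1), and u = (na-1)(n+1)/(n-1). The function f(x) = (na-1+x)^n / x on [l, u] attains its maximum at x = u, with maximum value 2^n · n^n · (na-1)^(n-1) · (n-1)^(1-n) / (n+1). -/
open Finset Set

lemma sq_le_two_pow' : ∀ n : ℕ, 4 ≤ n → n ^ 2 ≤ 2 ^ n := by
  intro n hn
  induction n, hn using Nat.le_induction with
  | base => norm_num
  | succ n hn ih =>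
    have h1 : (n + 1) ^ 2 ≤ 2 * n ^ 2 := by nlinarith
    calc (n + 1) ^ 2 ≤ 2 * n ^ 2 := h1
      _ ≤ 2 * 2 ^ n := Nat.mul_le_mul_left _ ih
      _ = 2 ^ (n + 1) := by ring

lemma nat_key (m : ℕ) : (m + 2) ^ (m + 2) ≤ 2 ^ (m + 2) * (m + 3) ^ m := by
  match m with
  | 0 => norm_num
  | 1 => norm_num
  | (k + 2) =>
    have h1 : (k + 4) ^ 2 ≤ 2 ^ (k + 4) := sq_le_two_pow' _ (by omega)
    have h2 : (k + 4) ^ (k + 2) ≤ (k + 5) ^ (k + 2) := Nat.pow_le_pow_left (by omega) _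
    calc (k + 4) ^ (k + 4) = (k + 4) ^ 2 * (k + 4) ^ (k + 2) := by ring
      _ ≤ 2 ^ (k + 4) * (k + 5) ^ (k + 2) := Nat.mul_le_mul h1 h2

lemma conv_aux (c : ℝ) (hc : 0 ≤ c) (n : ℕ) :
    ConvexOn ℝ (Set.Ioi (0 : ℝ)) (fun x => (c + x) ^ n / x) := by
  have h : ConvexOn ℝ (Set.Ioi (0 : ℝ))
      (fun x => ∑ k ∈ Finset.range (n + 1),
        (c ^ (n - k) * (n.choose k : ℝ)) • (x ^ ((k : ℤ) - 1))) := by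
    have := Finset.sum_induction
      (fun k : ℕ => (fun x : ℝ => (c ^ (n - k) * (n.choose k : ℝ)) • (x ^ ((k : ℤ) - 1))))
      (fun g : ℝ → ℝ => ConvexOn ℝ (Set.Ioi (0 : ℝ)) g)
      (fun f g hf hg => hf.add hg)
      (convexOn_const 0 (convex_Ioi 0))
      (fun k _ => (convexOn_zpow ((k : ℤ) - 1)).smul (by positivity))
      (s := Finset.range (n + 1))
    convert this using 1
    ext x
    simp [Finset.sum_apply]
  refine h.congr ?_
  intro x hx
  have hx0 : x ≠ 0 := ne_of_gt hx
  simp only [smul_eq_mul]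
  rw [add_comm c x, add_pow, Finset.sum_div]
  refine Finset.sum_congr rfl fun k _ => ?_
  rw [zpow_sub₀ hx0, zpow_natCast, zpow_one]
  field_simp

theorem stmt_2 (n : ℕ) (hn : 2 ≤ n) (a : ℝ) (ha : a > 1 / n)
    (l u : ℝ) (hl : l = (n * a - 1) / (n ^ 2 - 1))
    (hu : u = (n * a - 1) * (n + 1) / (n - 1))
    (f : ℝ → ℝ) (hf : ∀ x, f x = (n * a - 1 + x) ^ n / x) :
    (∀ x ∈ Set.Icc l u, f x ≤ f u) ∧
      f u = 2 ^ n * (n : ℝ) ^ n * (n * a - 1) ^ (n - 1) * ((n : ℝ) - 1) ^ ((1 : ℤ) - n) / (n + 1) := by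
  obtain ⟨m, rfl⟩ : ∃ m, n = m + 2 := ⟨n - 2, by omega⟩
  have hN : ((m : ℝ) + 2 : ℝ) = ((m + 2 : ℕ) : ℝ) := by push_cast; ring
  set N : ℝ := ((m + 2 : ℕ) : ℝ) with hNdef
  have hN2 : (2 : ℝ) ≤ N := by rw [hNdef]; push_cast; linarith
  have hNpos : (0 : ℝ) < N := by linarith
  have hc : 0 < N * a - 1 := by
    rw [gt_iff_lt, div_lt_iff₀ hNpos] at ha
    linarith
  set c : ℝ := N * a - 1 with hcdef
  have hd1 : (0 : ℝ) < N - 1 := by linarith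
  have hd2 : (0 : ℝ) < N + 1 := by linarith
  have hd3 : (0 : ℝ) < N ^ 2 - 1 := by nlinarith
  have hlpos : 0 < l := by rw [hl]; positivity
  have hupos : 0 < u := by rw [hu]; positivity
  have hlu : l ≤ u := by
    rw [hl, hu, div_le_div_iff₀ hd3 hd1]
    nlinarith [mul_pos hc hd1, mul_pos (mul_pos hc hd2) hd3]
  have hsub1 : m + 2 - 1 = m + 1 := by omega
  have ne1 : (N - 1) ≠ 0 := hd1.ne'
  have ne2 : (N + 1) ≠ 0 := hd2.ne'
  have ne3 : (N ^ 2 - 1) ≠ 0 := hd3.ne'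
  have nec : c ≠ 0 := hc.ne'
  -- value at u
  have hcu : c + u = 2 * N * c / (N - 1) := by
    rw [hu]; field_simp; ring
  have hfu : f u = 2 ^ (m + 2) * N ^ (m + 2) * c ^ (m + 1) / ((N - 1) ^ (m + 1) * (N + 1)) := by
    rw [hf, hcu, hu, div_pow, mul_pow, mul_pow, div_div_eq_mul_div, div_mul_eq_mul_div, div_div,
      div_eq_div_iff (by positivity) (by positivity)]
    ring
  -- value at l
  have hcl : c + l = c * N ^ 2 / (N ^ 2 - 1) := by
    rw [hl]; field_simp; ring
  have hfl : f l = N ^ (2 * (m + 2)) * c ^ (m + 1) / ((N ^ 2 - 1) ^ (m + 1)) := by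
    rw [hf, hcl, hl, div_pow, mul_pow, ← pow_mul, div_div_eq_mul_div, div_mul_eq_mul_div, div_div,
      div_eq_div_iff (by positivity) (by positivity)]
    ring
  -- key inequality
  have key : N ^ (m + 2) ≤ 2 ^ (m + 2) * (N + 1) ^ m := by
    have := nat_key m
    have h := (Nat.cast_le (α := ℝ)).2 this
    push_cast at h
    calc N ^ (m + 2) = ((m : ℝ) + 2) ^ (m + 2) := by rw [hNdef]; push_cast; ring
      _ ≤ _ := h
      _ = 2 ^ (m + 2) * (N + 1) ^ m := by rw [hNdef]; push_cast; ring
  have hflu : f l ≤ f u := by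
    rw [hfl, hfu]
    rw [div_le_div_iff₀ (by positivity) (by positivity)]
    have e : (N ^ 2 - 1) ^ (m + 1) = (N - 1) ^ (m + 1) * (N + 1) ^ (m + 1) := by
      rw [← mul_pow]; congr 1; ring
    rw [e]
    have h2 : N ^ (2 * (m + 2)) = N ^ (m + 2) * N ^ (m + 2) := by
      rw [← pow_add]; congr 1; omega
    rw [h2, pow_succ (N + 1) m]
    have hK : N ^ (m + 2) * N ^ (m + 2) ≤ (2 ^ (m + 2) * (N + 1) ^ m) * N ^ (m + 2) :=
      mul_le_mul_of_nonneg_right key (by positivity)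
    nlinarith [mul_le_mul_of_nonneg_right hK
      (show (0 : ℝ) ≤ c ^ (m + 1) * (N - 1) ^ (m + 1) * (N + 1) by positivity),
      pow_pos hd2 m, pow_pos hd1 (m + 1), pow_pos hc (m + 1)]
  -- convexity
  have hconv : ConvexOn ℝ (Set.Icc l u) f := by
    have h := conv_aux c hc.le (m + 2)
    have hsub : Set.Icc l u ⊆ Set.Ioi (0 : ℝ) := fun x hx => lt_of_lt_of_le hlpos hx.1
    exact (h.subset hsub (convex_Icc l u)).congr fun x _ => (hf x).symm
  constructor
  · intro x hx
    have hseg : x ∈ segment ℝ l u := by rwa [segment_eq_Icc hlu]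
    have h := hconv.le_on_segment (left_mem_Icc.2 hlu) (right_mem_Icc.2 hlu) hseg
    exact h.trans (max_le hflu le_rfl)
  · have hzp : (N - 1) ^ ((1 : ℤ) - (m + 2 : ℕ)) = ((N - 1) ^ (m + 1)) ⁻¹ := by
      rw [show ((1 : ℤ) - (m + 2 : ℕ)) = -((m + 1 : ℕ) : ℤ) by push_cast; ring,
        zpow_neg, zpow_natCast]
    rw [hfu, hsub1, hzp]
    field_simp
end

section
/- Let n ≥ 2, let a, h be reals with a - h(n-1) = 1 and a + h > 0, and let r, m be nonzero reals satisfying (na-1)/(n²-1) ≤ (m/r)² ≤ (na-1)(n+1)/(n-1). Then the quantity δ = ((na-1)r² + m²)^(n/2) / (2^n · n^(n/2) · (a+h)^((n-1)/2) · |m r^(n-1)|) satisfies 1/2^n ≤ δ ≤ 1/(2^(n/2) √(n+1)). -/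
private lemma bern_aux (k : ℕ) (b t : ℝ) (hb : 0 < b) (ht : 0 < t) :
    ((k:ℝ)+1)^(k+1) * b^k * t ≤ ((k:ℝ)*b + t)^(k+1) := by
  set u : ℝ := (t/b - 1)/((k:ℝ)+1) with hu
  have hk1 : (0:ℝ) < (k:ℝ)+1 := by positivity
  have htb : 0 < t/b := div_pos ht hb
  have h2u : (-2:ℝ) ≤ u := by
    rw [hu, le_div_iff₀ hk1]
    nlinarith
  have key := one_add_mul_le_pow h2u (k+1)
  push_cast at key
  have e1 : ((k:ℝ)+1)^(k+1) * b^k * t = (1 + ((k:ℝ)+1)*u) * (((k:ℝ)+1)*b)^(k+1) := by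
    rw [mul_pow, hu]
    field_simp
    ring
  have e2 : ((k:ℝ)*b + t)^(k+1) = (1+u)^(k+1) * (((k:ℝ)+1)*b)^(k+1) := by
    rw [← mul_pow, hu]
    congr 1
    field_simp
    ring
  rw [e1, e2]
  exact mul_le_mul_of_nonneg_right key (by positivity)

private lemma bern_main (n : ℕ) (hn : 1 ≤ n) (b t : ℝ) (hb : 0 < b) (ht : 0 < t) :
    (n:ℝ)^n * b^(n-1) * t ≤ (((n:ℝ)-1)*b + t)^n := by
  obtain ⟨k, rfl⟩ : ∃ k, n = k+1 := ⟨n-1, by omega⟩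
  have H := bern_aux k b t hb ht
  push_cast
  try simp only [Nat.add_sub_cancel]
  rw [show (k:ℝ)+1-1 = (k:ℝ) from by ring]
  exact H

private lemma twoA (n : ℕ) (hn : 1 ≤ n) : 2*(n:ℝ)^n ≤ ((n:ℝ)+1)^n := by
  have hn0 : (0:ℝ) < n := by exact_mod_cast hn
  have key := one_add_mul_le_pow (show (-2:ℝ) ≤ 1/(n:ℝ) from le_trans (show (-2:ℝ) ≤ 0 from by norm_num) (by positivity)) n
  have h1 : 1 + (n:ℝ)*(1/(n:ℝ)) = 2 := by
    field_simp
    norm_num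
  have h2 : ((1:ℝ)+1/(n:ℝ))^n * (n:ℝ)^n = ((n:ℝ)+1)^n := by
    rw [← mul_pow]
    congr 1
    field_simp
  calc 2*(n:ℝ)^n = (1 + (n:ℝ)*(1/(n:ℝ))) * (n:ℝ)^n := by rw [h1]
    _ ≤ ((1:ℝ)+1/(n:ℝ))^n * (n:ℝ)^n :=
        mul_le_mul_of_nonneg_right key (by positivity)
    _ = ((n:ℝ)+1)^n := h2

private lemma lemB (n : ℕ) (hn : 3 ≤ n) : (n+1)^2 ≤ 2^(n+1) := by
  induction n, hn using Nat.le_induction with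
  | base => norm_num
  | succ n hn ih =>
    have h2 : 2 ≤ n*n := by nlinarith
    calc (n+1+1)^2 ≤ 2*(n+1)^2 := by nlinarith
      _ ≤ 2*2^(n+1) := by omega
      _ = 2^(n+1+1) := by ring

private lemma keyNat (n : ℕ) (hn : 2 ≤ n) :
    (n:ℝ)^n * ((n:ℝ)+1)^2 ≤ (2*((n:ℝ)+1))^n := by
  rcases eq_or_lt_of_le hn with heq | hlt
  · subst heq
    norm_num
  · have hn3 : 3 ≤ n := hlt
    have hA := twoA n (by omega)
    have hB : (((n:ℝ))+1)^2 ≤ 2^(n+1) := by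
      have := lemB n hn3
      exact_mod_cast this
    have hnn : (0:ℝ) ≤ (n:ℝ)^n := by positivity
    calc (n:ℝ)^n * ((n:ℝ)+1)^2 ≤ (n:ℝ)^n * 2^(n+1) := mul_le_mul_of_nonneg_left hB hnn
      _ = 2^n * (2*(n:ℝ)^n) := by ring
      _ ≤ 2^n * ((n:ℝ)+1)^n := mul_le_mul_of_nonneg_left hA (by positivity)
      _ = (2*((n:ℝ)+1))^n := by rw [mul_pow]

private lemma upper_main (n : ℕ) (hn : 2 ≤ n) (b t : ℝ) (hb : 0 < b)
    (h1 : b/((n:ℝ)+1) ≤ t) (h2 : t ≤ ((n:ℝ)+1)*b) :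
    (((n:ℝ)-1)*b + t)^n * ((n:ℝ)+1) ≤ 2^n * (n:ℝ)^n * b^(n-1) * t := by
  have hN2 : (2:ℝ) ≤ (n:ℝ) := by exact_mod_cast hn
  have hNp : (0:ℝ) < (n:ℝ)+1 := by linarith
  have hN1 : (0:ℝ) < (n:ℝ)-1 := by linarith
  have hN0 : (0:ℝ) < (n:ℝ) := by linarith
  have hbn : b^(n-1)*b = b^n := by
    rw [← pow_succ]
    congr 1
    omega
  set p := b/((n:ℝ)+1) with hp
  set q := ((n:ℝ)+1)*b with hq
  have hp0 : 0 < p := div_pos hb hNp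
  have hq0 : 0 < q := by positivity
  have hpq : p < q := by
    rw [hp, hq, div_lt_iff₀ hNp]
    nlinarith
  set K := (2:ℝ)^n * (n:ℝ)^n * b^(n-1) with hK
  have hK0 : 0 < K :=
    mul_pos (mul_pos (pow_pos two_pos n) (pow_pos hN0 n)) (pow_pos hb _)
  have hKb : K*b = 2^n*(n:ℝ)^n*b^n := by rw [hK, mul_assoc, hbn]
  -- endpoint equality at q
  have hEq : (((n:ℝ)-1)*b + q)^n*((n:ℝ)+1) = K*q := by
    rw [hq, show ((n:ℝ)-1)*b + ((n:ℝ)+1)*b = 2*(n:ℝ)*b from by ring,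
      mul_pow, mul_pow, ← hbn]
    ring
  -- endpoint inequality at p
  have hEp : (((n:ℝ)-1)*b + p)^n*((n:ℝ)+1) ≤ K*p := by
    have hkey := keyNat n hn
    have hAval : ((n:ℝ)-1)*b + p = (n:ℝ)^2*b/((n:ℝ)+1) := by
      rw [hp]; field_simp; ring
    rw [hAval, hp, div_pow, div_mul_eq_mul_div, ← mul_div_assoc,
      div_le_div_iff₀ (pow_pos hNp n) hNp, hKb]
    have hnn : (0:ℝ) ≤ (n:ℝ)^n * b^n := by positivity
    have h3 := mul_le_mul_of_nonneg_left hkey hnn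
    have e : ((n:ℝ)^2*b)^n*((n:ℝ)+1)*((n:ℝ)+1) = (n:ℝ)^n*b^n*((n:ℝ)^n*((n:ℝ)+1)^2) := by
      rw [mul_pow]; ring
    have e2 : 2^n*(n:ℝ)^n*b^n*((n:ℝ)+1)^n = (n:ℝ)^n*b^n*((2*((n:ℝ)+1))^n) := by
      rw [mul_pow 2 ((n:ℝ)+1)]; ring
    rw [e, e2]
    exact h3
  -- convex combination
  have hd : 0 < q - p := by linarith
  set α := (q - t)/(q-p) with hα'
  set β := (t - p)/(q-p) with hβ'
  have hα : 0 ≤ α := div_nonneg (by linarith) hd.le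
  have hβ : 0 ≤ β := div_nonneg (by linarith) hd.le
  have hαβ : α + β = 1 := by
    rw [hα', hβ', ← add_div]
    field_simp
    ring
  have hcomb : α*p + β*q = t := by
    rw [hα', hβ']
    field_simp
    ring
  have hmemp : ((n:ℝ)-1)*b + p ∈ Set.Ici (0:ℝ) := Set.mem_Ici.mpr (by nlinarith)
  have hmemq : ((n:ℝ)-1)*b + q ∈ Set.Ici (0:ℝ) := Set.mem_Ici.mpr (by nlinarith)
  have hconv := (convexOn_pow n).2 hmemp hmemq hα hβ hαβ
  simp only [smul_eq_mul] at hconv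
  have hXc : ((n:ℝ)-1)*b + t = α*(((n:ℝ)-1)*b+p) + β*(((n:ℝ)-1)*b+q) := by
    linear_combination (-((( n:ℝ)-1)*b))*hαβ - hcomb
  calc (((n:ℝ)-1)*b + t)^n * ((n:ℝ)+1)
      ≤ (α*(((n:ℝ)-1)*b+p)^n + β*(((n:ℝ)-1)*b+q)^n) * ((n:ℝ)+1) := by
        apply mul_le_mul_of_nonneg_right _ (by linarith)
        rw [hXc]
        exact hconv
    _ = α*((((n:ℝ)-1)*b+p)^n*((n:ℝ)+1)) + β*((((n:ℝ)-1)*b+q)^n*((n:ℝ)+1)) := by ring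
    _ ≤ α*(K*p) + β*(K*q) :=
        add_le_add (mul_le_mul_of_nonneg_left hEp hα) (le_of_eq (by rw [hEq]))
    _ = K*(α*p + β*q) := by ring
    _ = K*t := by rw [hcomb]
theorem stmt_6 (n : ℕ) (hn : 2 ≤ n) (a h : ℝ)
    (hah : a - h * (n - 1) = 1) (hpos : a + h > 0)
    (r m : ℝ) (hr : r ≠ 0) (hm : m ≠ 0)
    (hlow : (n * a - 1) / ((n : ℝ) ^ 2 - 1) ≤ (m / r) ^ 2)
    (hhigh : (m / r) ^ 2 ≤ (n * a - 1) * (n + 1) / (n - 1))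
    (δ : ℝ)
    (hδ : δ = ((n * a - 1) * r ^ 2 + m ^ 2) ^ ((n : ℝ) / 2) /
      (2 ^ n * (n : ℝ) ^ ((n : ℝ) / 2) * (a + h) ^ (((n : ℝ) - 1) / 2) * |m * r ^ (n - 1)|)) :
    1 / 2 ^ n ≤ δ ∧ δ ≤ 1 / (2 ^ ((n : ℝ) / 2) * Real.sqrt (n + 1)) := by
  have hn0 : 0 < n := by omega
  have hN2 : (2:ℝ) ≤ (n:ℝ) := by exact_mod_cast hn
  have hN0 : (0:ℝ) < (n:ℝ) := by linarith
  have hN1 : (0:ℝ) < (n:ℝ) - 1 := by linarith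
  have hNp : (0:ℝ) < (n:ℝ) + 1 := by linarith
  set b : ℝ := a + h with hbdef
  have hb : 0 < b := hpos
  have hC : (n:ℝ) * a - 1 = ((n:ℝ) - 1) * b := by
    rw [hbdef]; linear_combination hah
  set t : ℝ := (m/r)^2 with htdef
  have ht : 0 < t :=
    lt_of_le_of_ne (sq_nonneg _) (Ne.symm (pow_ne_zero 2 (div_ne_zero hm hr)))
  have hm2 : m^2 = t * r^2 := by
    rw [htdef, div_pow]
    field_simp
  set X : ℝ := ((n:ℝ)-1)*b + t with hXdef
  have hX : 0 < X := by rw [hXdef]; nlinarith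
  -- bounds on t
  have htl : b/((n:ℝ)+1) ≤ t := by
    have e : ((n:ℝ)*a-1)/((n:ℝ)^2-1) = b/((n:ℝ)+1) := by
      rw [hC, show (n:ℝ)^2-1 = ((n:ℝ)-1)*((n:ℝ)+1) from by ring,
        mul_div_mul_left _ _ (ne_of_gt hN1)]
    rw [e] at hlow
    exact hlow
  have htu : t ≤ ((n:ℝ)+1)*b := by
    rw [hC] at hhigh
    have e : ((n:ℝ)-1)*b*((n:ℝ)+1)/((n:ℝ)-1) = ((n:ℝ)+1)*b := by
      field_simp
    rw [e] at hhigh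
    exact hhigh
  -- key inequalities
  have hLow : (n:ℝ)^n * b^(n-1) * t ≤ X^n := by
    rw [hXdef]
    exact bern_main n (by omega) b t hb ht
  have hUp : X^n * ((n:ℝ)+1) ≤ 2^n * (n:ℝ)^n * b^(n-1) * t := by
    rw [hXdef]
    exact upper_main n hn b t hb htl htu
  -- rewrite δ
  have hnum : ((n:ℝ)*a - 1)*r^2 + m^2 = r^2 * X := by
    rw [hXdef]
    linear_combination r^2*hC + hm2
  rw [hnum] at hδ
  have hrX : (0:ℝ) ≤ r^2*X := mul_nonneg (sq_nonneg r) hX.le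
  have hmr : m * r^(n-1) ≠ 0 := mul_ne_zero hm (pow_ne_zero _ hr)
  have habs : 0 < |m * r^(n-1)| := abs_pos.mpr hmr
  have hD0 : 0 < 2^n * (n:ℝ)^((n:ℝ)/2) * b^(((n:ℝ)-1)/2) * |m*r^(n-1)| := by
    apply mul_pos (mul_pos (mul_pos (pow_pos two_pos n)
      (Real.rpow_pos_of_pos hN0 _)) (Real.rpow_pos_of_pos hb _)) habs
  have hδ0 : 0 ≤ δ := by
    rw [hδ]
    exact div_nonneg (Real.rpow_nonneg hrX _) hD0.le
  -- squares of the rpow pieces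
  have hsq1 : ((r^2*X)^((n:ℝ)/2))^2 = (r^2*X)^n := by
    rw [← Real.rpow_natCast ((r^2*X)^((n:ℝ)/2)) 2, ← Real.rpow_mul hrX,
      show (n:ℝ)/2*((2:ℕ):ℝ) = ((n:ℕ):ℝ) from by push_cast; ring,
      Real.rpow_natCast]
  have hsq2 : (((n:ℝ))^((n:ℝ)/2))^2 = (n:ℝ)^n := by
    rw [← Real.rpow_natCast (((n:ℝ))^((n:ℝ)/2)) 2, ← Real.rpow_mul hN0.le,
      show (n:ℝ)/2*((2:ℕ):ℝ) = ((n:ℕ):ℝ) from by push_cast; ring,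
      Real.rpow_natCast]
  have hsq3 : (b^(((n:ℝ)-1)/2))^2 = b^(n-1) := by
    rw [← Real.rpow_natCast (b^(((n:ℝ)-1)/2)) 2, ← Real.rpow_mul hb.le,
      show ((n:ℝ)-1)/2*((2:ℕ):ℝ) = (((n-1:ℕ)):ℝ) from by
        rw [Nat.cast_sub (by omega : 1 ≤ n)]; push_cast; ring,
      Real.rpow_natCast]
  have h2pow : ((2:ℝ)^n)^2 = 4^n := by
    rw [← pow_mul, show n*2 = 2*n from by ring, pow_mul]
    norm_num
  have sqle : ∀ x y : ℝ, 0 ≤ x → 0 ≤ y → x^2 ≤ y^2 → x ≤ y := by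
    intro x y hx hy hxy
    nlinarith
  have hE : m^2*(r^(n-1))^2 = t*(r^2)^n := by
    have hrr : (r^(n-1))^2 * r^2 = (r^2)^n := by
      rw [← pow_mul, ← pow_mul, ← pow_add]
      congr 1
      omega
    calc m^2*(r^(n-1))^2 = t*((r^(n-1))^2*r^2) := by rw [hm2]; ring
      _ = t*(r^2)^n := by rw [hrr]
  -- δ² formula
  have hδ2 : δ^2 = X^n/(4^n*(n:ℝ)^n*b^(n-1)*t) := by
    have h1 : δ^2 = ((r^2)^n*X^n) / ((4:ℝ)^n*(n:ℝ)^n*b^(n-1)*(t*(r^2)^n)) := by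
      rw [hδ, div_pow, mul_pow, mul_pow, mul_pow, hsq1, hsq2, hsq3, sq_abs]
      congr 1
      · rw [mul_pow]
      · rw [mul_pow m, hE, h2pow]
    rw [h1, show (4:ℝ)^n*(n:ℝ)^n*b^(n-1)*(t*(r^2)^n)
        = ((4:ℝ)^n*(n:ℝ)^n*b^(n-1)*t)*(r^2)^n from by ring,
      show (r^2)^n*X^n = X^n*(r^2)^n from by ring,
      mul_div_mul_right _ _ (pow_ne_zero n (pow_ne_zero 2 hr))]
  have hden : (0:ℝ) < 4^n*(n:ℝ)^n*b^(n-1)*t := by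
    apply mul_pos (mul_pos (mul_pos (pow_pos (by norm_num) n)
      (pow_pos hN0 n)) (pow_pos hb _)) ht
  constructor
  · -- lower bound
    have hc0 : (0:ℝ) < 1/2^n := by positivity
    have hgoal2 : ((1:ℝ)/2^n)^2 ≤ δ^2 := by
      rw [hδ2, div_pow, one_pow, div_le_div_iff₀ (by positivity) hden]
      calc (1:ℝ)*(4^n*(n:ℝ)^n*b^(n-1)*t) = 4^n*((n:ℝ)^n*b^(n-1)*t) := by ring
        _ ≤ 4^n*X^n := mul_le_mul_of_nonneg_left hLow (by positivity)
        _ = X^n*((2:ℝ)^n)^2 := by rw [h2pow]; ring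
    exact sqle _ _ hc0.le hδ0 hgoal2
  · -- upper bound
    have hRH : (0:ℝ) < 1/(2^((n:ℝ)/2)*Real.sqrt ((n:ℝ)+1)) := by positivity
    have h22 : ((2:ℝ)^((n:ℝ)/2))^2 = 2^n := by
      rw [← Real.rpow_natCast ((2:ℝ)^((n:ℝ)/2)) 2,
        ← Real.rpow_mul (by norm_num : (0:ℝ) ≤ 2),
        show (n:ℝ)/2*((2:ℕ):ℝ) = ((n:ℕ):ℝ) from by push_cast; ring,
        Real.rpow_natCast]
    have hsqR : ((1:ℝ)/(2^((n:ℝ)/2)*Real.sqrt ((n:ℝ)+1)))^2 = 1/(2^n*((n:ℝ)+1)) := by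
      rw [div_pow, one_pow, mul_pow, Real.sq_sqrt hNp.le, h22]
    have hgoal2 : δ^2 ≤ ((1:ℝ)/(2^((n:ℝ)/2)*Real.sqrt ((n:ℝ)+1)))^2 := by
      rw [hsqR, hδ2, div_le_div_iff₀ hden (by positivity)]
      calc X^n*(2^n*((n:ℝ)+1)) = 2^n*(X^n*((n:ℝ)+1)) := by ring
        _ ≤ 2^n*(2^n*(n:ℝ)^n*b^(n-1)*t) := mul_le_mul_of_nonneg_left hUp (by positivity)
        _ = 1*(4^n*(n:ℝ)^n*b^(n-1)*t) := by
            rw [show (4:ℝ) = 2*2 from by norm_num, mul_pow]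
            ring
    exact sqle _ _ hδ0 hRH.le hgoal2
end

section
/- Let n ≥ 2, let a, h be reals with a - h(n-1) = 1 and a + h > 0, and set ã = (1+h)/(a+h), h̃ = -h/(a+h). Then ã - (n-1)h̃ = 1, ã + h̃ > 0, and the n×n matrices G (diagonal a, off-diagonal -h) and G̃ (diagonal ã, off-diagonal -h̃) satisfy G·G̃ = Iₙ. In particular the dual of a tame lattice with parameters (a,h) is tame with parameters ((1+h)/(a+h), h/(a+h)). -/
theorem stmt_10 (n : ℕ) (hn : 2 ≤ n) (a h : ℝ)
    (hah : a - h * (n - 1) = 1) (hpos : a + h > 0)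
    (a' h' : ℝ) (ha' : a' = (1 + h) / (a + h)) (hh' : h' = -h / (a + h))
    (G G' : Matrix (Fin n) (Fin n) ℝ)
    (hG : ∀ i j, G i j = if i = j then a else -h)
    (hG' : ∀ i j, G' i j = if i = j then a' else -h') :
    a' - h' * (n - 1) = 1 ∧ a' + h' > 0 ∧ G * G' = 1 := by
  have hne : a + h ≠ 0 := ne_of_gt hpos
  have ha : a = 1 + h * (n - 1) := by linarith
  refine ⟨?_, ?_, ?_⟩
  · rw [ha', hh']
    field_simp
    linear_combination -hah
  · have : a' + h' = 1 / (a + h) := by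
      rw [ha', hh']; field_simp; ring
    rw [this]
    positivity
  · ext i j
    rw [Matrix.mul_apply, Matrix.one_apply]
    have hpt : ∀ k : Fin n, G i k * G' k j =
        h * h' + ((if i = k then (a + h) * (-h') else 0) +
        ((if k = j then (-h) * (a' + h') else 0) +
        (if i = k then (if k = j then (a + h) * (a' + h') else 0) else 0))) := by
      intro k
      rw [hG, hG']
      split_ifs <;> ring
    rw [Finset.sum_congr rfl fun k _ => hpt k]
    rw [Finset.sum_add_distrib, Finset.sum_add_distrib, Finset.sum_add_distrib,
      Finset.sum_const, Finset.sum_ite_eq, Finset.sum_ite_eq', Finset.sum_ite_eq]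
    simp only [Finset.mem_univ, if_true, Finset.card_univ, Fintype.card_fin, nsmul_eq_mul]
    subst ha' hh' ha
    split_ifs with hij
    · field_simp
      ring
    · field_simp
      ring
end

section
/- Let n ≥ 2, let e₁,…,eₙ be a Lagrangian basis of a tame lattice L ⊂ ℝⁿ with parameters a = ⟨e₁,e₁⟩, h = -⟨e₁,e₂⟩, v₁ = Σ eᵢ. Let r, s be integers with s = rh and 0 < |r| < n, and c = 1/(r(a+h)). Then ⟨r eᵢ + s v₁, c eⱼ⟩ = δ_{ij} for all i, j; in particular the dual of the lattice spanned by {r eᵢ + s v₁} is (1/(r(a+h)))·L. -/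
open scoped RealInnerProductSpace

theorem stmt_11 (n : ℕ) (hn : 2 ≤ n) (a h : ℝ)
    (e : Fin n → EuclideanSpace ℝ (Fin n))
    (hdiag : ∀ i, ⟪e i, e i⟫ = a)
    (hoff : ∀ i j, i ≠ j → ⟪e i, e j⟫ = -h)
    (v₁ : EuclideanSpace ℝ (Fin n)) (hv₁ : v₁ = ∑ i, e i)
    (hev : ∀ i, ⟪e i, v₁⟫ = 1)
    (hah : a - h * (n - 1) = 1)
    (r s : ℤ) (hs : (s : ℝ) = r * h) (hr : 0 < |r|) (hrn : |r| < n)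
    (c : ℝ) (hc : c = 1 / (r * (a + h))) :
    ∀ i j, ⟪(r : ℝ) • e i + (s : ℝ) • v₁, c • e j⟫ = if i = j then 1 else 0 := by
  have hr0 : r ≠ 0 := by
    intro h0; rw [h0] at hr; simp at hr
  have hr0' : (r : ℝ) ≠ 0 := Int.cast_ne_zero.mpr hr0
  have hA : a + h ≠ 0 := by
    intro hA0
    have hha : h = -a := by linarith
    have hna : (n : ℝ) * a = 1 := by
      rw [hha] at hah; ring_nf at hah ⊢; linarith
    have hsn : (s : ℝ) * n = -r := by
      rw [hs, hha]
      have : (r : ℝ) * -a * n = -(r * ((n:ℝ) * a)) := by ring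
      rw [this, hna]; ring
    have hsnz : (s : ℤ) * n = -r := by
      have := hsn
      exact_mod_cast this
    have : |r| = n * |s| := by
      have h1 : |s * (n:ℤ)| = |r| := by rw [hsnz, abs_neg]
      rw [abs_mul, Int.abs_natCast] at h1
      linarith [h1]
    rcases eq_or_ne s 0 with h0 | h0
    · simp [h0] at this; omega
    · have : (n : ℤ) * 1 ≤ n * |s| := by
        have : 1 ≤ |s| := Int.one_le_abs h0
        exact mul_le_mul_of_nonneg_left this (by positivity)
      omega
  intro i j
  have hvj : ⟪v₁, e j⟫ = 1 := by rw [real_inner_comm]; exact hev j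
  rw [inner_add_left, real_inner_smul_left, real_inner_smul_left,
    real_inner_smul_right, real_inner_smul_right, hvj]
  by_cases hij : i = j
  · subst hij
    rw [hdiag, if_pos rfl, hc, hs]
    field_simp
  · rw [hoff i j hij, if_neg hij, hs]
    ring
end

section
/- Let n ≥ 3 be an integer. The function f(x) = x^(n-3)(x³ + (2-x²)^(3/2)) is strictly increasing on the interval [1, √2]. -/
lemma g_strictMono : StrictMonoOn (fun x : ℝ => x ^ 3 + (2 - x ^ 2) ^ ((3 : ℝ) / 2))
    (Set.Icc 1 (Real.sqrt 2)) := by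
  apply strictMonoOn_of_deriv_pos (convex_Icc _ _)
  · apply ContinuousOn.add (by fun_prop)
    apply ContinuousOn.rpow_const (by fun_prop)
    intro x hx
    right; norm_num
  · intro x hx
    rw [interior_Icc, Set.mem_Ioo] at hx
    obtain ⟨hx1, hx2⟩ := hx
    have hx0 : (0 : ℝ) < x := by linarith
    have hx2' : x ^ 2 < 2 := by
      have := (Real.lt_sqrt hx0.le).mp hx2
      linarith
    have hpos : (0 : ℝ) < 2 - x ^ 2 := by linarith
    have h2 : HasDerivAt (fun x : ℝ => 2 - x ^ 2) (-(2 * x)) x := by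
      simpa using ((hasDerivAt_pow 2 x).const_sub 2)
    have h3 : HasDerivAt (fun y : ℝ => y ^ ((3 : ℝ) / 2))
        ((3 / 2) * (2 - x ^ 2) ^ ((3 : ℝ) / 2 - 1)) (2 - x ^ 2) :=
      Real.hasDerivAt_rpow_const (Or.inl hpos.ne')
    have h4 := h3.comp x h2
    simp only [Function.comp_def] at h4
    have h1 : HasDerivAt (fun x : ℝ => x ^ 3) (3 * x ^ 2) x := by
      simpa using hasDerivAt_pow 3 x
    have h5 : HasDerivAt (fun x : ℝ => x ^ 3 + (2 - x ^ 2) ^ ((3 : ℝ) / 2)) _ x := h1.add h4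
    rw [h5.deriv]
    have hlt1 : (2 - x ^ 2) ^ ((3 : ℝ) / 2 - 1) < 1 := by
      apply Real.rpow_lt_one hpos.le (by nlinarith) (by norm_num)
    have hnn : (0 : ℝ) ≤ (2 - x ^ 2) ^ ((3 : ℝ) / 2 - 1) := Real.rpow_nonneg hpos.le _
    nlinarith

theorem stmt_13 (n : ℕ) (hn : 3 ≤ n) :
    StrictMonoOn (fun x : ℝ => x ^ (n - 3) * (x ^ 3 + (2 - x ^ 2) ^ ((3 : ℝ) / 2)))
      (Set.Icc 1 (Real.sqrt 2)) := by
  intro a ha b hb hab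
  obtain ⟨ha1, ha2⟩ := ha
  obtain ⟨hb1, hb2⟩ := hb
  have ha0 : (0 : ℝ) < a := by linarith
  have hb0 : (0 : ℝ) < b := by linarith
  have hpow : a ^ (n - 3) ≤ b ^ (n - 3) := pow_le_pow_left₀ ha0.le hab.le _
  have ha2' : a ^ 2 ≤ 2 := by
    have h := Real.sq_sqrt (by norm_num : (0:ℝ) ≤ 2)
    nlinarith [Real.sqrt_nonneg 2]
  have hga : (0 : ℝ) < a ^ 3 + (2 - a ^ 2) ^ ((3 : ℝ) / 2) := by
    have : (0:ℝ) ≤ (2 - a ^ 2) ^ ((3 : ℝ) / 2) := Real.rpow_nonneg (by linarith) _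
    nlinarith
  have hg : a ^ 3 + (2 - a ^ 2) ^ ((3 : ℝ) / 2) < b ^ 3 + (2 - b ^ 2) ^ ((3 : ℝ) / 2) :=
    g_strictMono ⟨ha1, ha2⟩ ⟨hb1, hb2⟩ hab
  calc a ^ (n - 3) * (a ^ 3 + (2 - a ^ 2) ^ ((3 : ℝ) / 2))
      ≤ b ^ (n - 3) * (a ^ 3 + (2 - a ^ 2) ^ ((3 : ℝ) / 2)) :=
        mul_le_mul_of_nonneg_right hpow hga.le
    _ < b ^ (n - 3) * (b ^ 3 + (2 - b ^ 2) ^ ((3 : ℝ) / 2)) :=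
        mul_lt_mul_of_pos_left hg (pow_pos hb0 _)
end

section
/- Let n ≥ 3 and 1 ≤ α ≤ √2, ᾱ = √(2-α²). Then the center density δ(Dₙ^α) = 1/(2^(n/2) α^(n-3)(α³+ᾱ³)) satisfies 1/2ⁿ ≤ δ(Dₙ^α) ≤ 1/2^(n/2+1), with the upper bound attained at α = 1 and the lower bound at α = √2; moreover α ↦ δ(Dₙ^α) is strictly decreasing on [1,√2]. -/
theorem stmt_14 (n : ℕ) (hn : 3 ≤ n) (δ : ℝ → ℝ)
    (hδ : ∀ α : ℝ, δ α =
      1 / (2 ^ ((n : ℝ) / 2) * α ^ (n - 3) * (α ^ 3 + (2 - α ^ 2) ^ ((3 : ℝ) / 2)))) :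
    (∀ α ∈ Set.Icc (1 : ℝ) (Real.sqrt 2), 1 / 2 ^ n ≤ δ α ∧ δ α ≤ 1 / 2 ^ ((n : ℝ) / 2 + 1)) ∧
      δ 1 = 1 / 2 ^ ((n : ℝ) / 2 + 1) ∧ δ (Real.sqrt 2) = 1 / 2 ^ n ∧
      StrictAntiOn δ (Set.Icc 1 (Real.sqrt 2)) := by
  have hs1 : (1:ℝ) ≤ Real.sqrt 2 := by
    nlinarith [Real.sq_sqrt (show (0:ℝ) ≤ 2 by norm_num), Real.sqrt_nonneg 2]
  set h : ℝ → ℝ := fun x => x ^ 3 + (2 - x ^ 2) ^ ((3:ℝ)/2) with hh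
  have hderiv : ∀ x : ℝ,
      HasDerivAt h (3*x^2 + (-(2*x)) * ((3:ℝ)/2) * (2 - x^2) ^ ((3:ℝ)/2 - 1)) x := by
    intro x
    have h1 : HasDerivAt (fun x:ℝ => x ^ 3) (3*x^2) x := by
      simpa using hasDerivAt_pow 3 x
    have h2 : HasDerivAt (fun x:ℝ => 2 - x^2) (-(2*x)) x := by
      simpa using (hasDerivAt_pow 2 x).const_sub 2
    exact h1.add (h2.rpow_const (Or.inr (by norm_num)))
  have hmono : StrictMonoOn h (Set.Icc 1 (Real.sqrt 2)) := by
    apply strictMonoOn_of_deriv_pos (convex_Icc _ _)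
    · exact fun x _ => ((hderiv x).continuousAt).continuousWithinAt
    · intro x hx
      rw [interior_Icc] at hx
      rw [(hderiv x).deriv]
      have hx1 : 1 < x := hx.1
      have hx2' : x^2 < 2 := by
        nlinarith [Real.sq_sqrt (show (0:ℝ) ≤ 2 by norm_num), hx.2, Real.sqrt_nonneg 2]
      have hr : (2 - x^2) ^ ((3:ℝ)/2 - 1) < 1 :=
        Real.rpow_lt_one (by nlinarith) (by nlinarith) (by norm_num)
      have hr0 : (0:ℝ) ≤ (2 - x^2) ^ ((3:ℝ)/2 - 1) :=
        Real.rpow_nonneg (by nlinarith) _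
      nlinarith [mul_pos (show (0:ℝ) < x by linarith)
        (show (0:ℝ) < 1 - (2 - x^2) ^ ((3:ℝ)/2 - 1) by linarith)]
  have hpos : ∀ x ∈ Set.Icc (1:ℝ) (Real.sqrt 2), 0 < h x := by
    intro x hx
    have hx2 : x^2 ≤ 2 := by
      nlinarith [Real.sq_sqrt (show (0:ℝ) ≤ 2 by norm_num), hx.2, hx.1]
    have : (0:ℝ) ≤ (2 - x^2) ^ ((3:ℝ)/2) := Real.rpow_nonneg (by linarith) _
    have hx1 := hx.1
    simp only [hh]
    nlinarith
  -- denominator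
  set D : ℝ → ℝ := fun x => 2 ^ ((n : ℝ) / 2) * x ^ (n - 3) * h x with hD
  have hδD : ∀ x, δ x = 1 / D x := by
    intro x; rw [hδ x]
  have hDpos : ∀ x ∈ Set.Icc (1:ℝ) (Real.sqrt 2), 0 < D x := by
    intro x hx
    have h1 : (0:ℝ) < x ^ (n-3) := pow_pos (by linarith [hx.1]) _
    have h2 := hpos x hx
    have h3 : (0:ℝ) < 2 ^ ((n : ℝ) / 2) := Real.rpow_pos_of_pos two_pos _
    positivity
  have hDmono : StrictMonoOn D (Set.Icc 1 (Real.sqrt 2)) := by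
    intro a ha b hb hab
    have hpw : a ^ (n-3) ≤ b ^ (n-3) := pow_le_pow_left₀ (by linarith [ha.1]) hab.le _
    have hbpw : (0:ℝ) < b ^ (n-3) := pow_pos (by linarith [hb.1]) _
    have hha : 0 < h a := hpos a ha
    have hhb := hmono ha hb hab
    have h3 : (0:ℝ) < 2 ^ ((n : ℝ) / 2) := Real.rpow_pos_of_pos two_pos _
    have : 2 ^ ((n : ℝ) / 2) * a ^ (n-3) * h a < 2 ^ ((n : ℝ) / 2) * b ^ (n-3) * h b := by
      calc 2 ^ ((n : ℝ) / 2) * a ^ (n-3) * h a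
          ≤ 2 ^ ((n : ℝ) / 2) * b ^ (n-3) * h a := by
            apply mul_le_mul_of_nonneg_right _ hha.le
            exact mul_le_mul_of_nonneg_left hpw h3.le
        _ < 2 ^ ((n : ℝ) / 2) * b ^ (n-3) * h b := by
            apply mul_lt_mul_of_pos_left hhb (by positivity)
    exact this
  have hanti : StrictAntiOn δ (Set.Icc 1 (Real.sqrt 2)) := by
    intro a ha b hb hab
    rw [hδD a, hδD b]
    exact one_div_lt_one_div_of_lt (hDpos a ha) (hDmono ha hb hab)
  -- endpoint values
  have hδ1 : δ 1 = 1 / 2 ^ ((n : ℝ) / 2 + 1) := by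
    rw [hδ, Real.rpow_add two_pos]
    norm_num [Real.one_rpow]
  have hδs : δ (Real.sqrt 2) = 1 / 2 ^ n := by
    rw [hδ]
    have hs2 : (Real.sqrt 2)^2 = 2 := Real.sq_sqrt (by norm_num)
    rw [hs2]
    have h0 : ((2:ℝ) - 2) ^ ((3:ℝ)/2) = 0 := by
      norm_num
    rw [h0, add_zero]
    have hpw : (Real.sqrt 2) ^ (n-3) * (Real.sqrt 2) ^ 3 = (Real.sqrt 2) ^ n := by
      rw [← pow_add]; congr 1; omega
    have hsn : (Real.sqrt 2) ^ n = 2 ^ ((n:ℝ)/2) := by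
      rw [Real.sqrt_eq_rpow, ← Real.rpow_natCast (2 ^ ((1:ℝ)/2)) n,
        ← Real.rpow_mul (by norm_num)]
      ring_nf
    have h2n : (2:ℝ) ^ ((n:ℝ)/2) * 2 ^ ((n:ℝ)/2) = 2 ^ n := by
      rw [← Real.rpow_add two_pos, ← Real.rpow_natCast 2 n]
      ring_nf
    rw [mul_assoc, hpw, hsn, h2n]
  have h1mem : (1:ℝ) ∈ Set.Icc (1:ℝ) (Real.sqrt 2) := ⟨le_refl _, hs1⟩
  have hsmem : Real.sqrt 2 ∈ Set.Icc (1:ℝ) (Real.sqrt 2) := ⟨hs1, le_refl _⟩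
  refine ⟨?_, hδ1, hδs, hanti⟩
  intro α hα
  constructor
  · rw [← hδs]
    exact hanti.antitoneOn hα hsmem hα.2
  · rw [← hδ1]
    exact hanti.antitoneOn h1mem hα hα.1
end

section
/- Let n ≥ 3, 1 < α < √2, ᾱ = √(2-α²), and let b₁,…,bₙ be the columns of the generator matrix M_{Dₙ^α}. Then every nonzero integer combination x = Σ cᵢ bᵢ with ‖x‖² ≤ 2 satisfies x = ±bᵢ for some i. In particular the set of minimal vectors of Dₙ^α is {±b₁,…,±bₙ}, λ₁²(Dₙ^α) = 2, and Dₙ^α is generic well-rounded with kissing number 2n. -/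
open Finset

/-- Generator matrix of the deformed checkerboard lattice `Dₙ^α` (0-indexed):
columns `b₁ = αe₁+ᾱe₂`, `b₂ = αe₂+ᾱe₃`, `b₃ = ᾱe₁+αe₃`, and for `j ≥ 4`,
`bⱼ = ᾱe_{j-1} - αeⱼ`. -/
def DnAlphaMatrix (n : ℕ) (α ᾱ : ℝ) : Matrix (Fin n) (Fin n) ℝ :=
  fun i j =>
    if (j : ℕ) = 0 then (if (i : ℕ) = 0 then α else if (i : ℕ) = 1 then ᾱ else 0)
    else if (j : ℕ) = 1 then (if (i : ℕ) = 1 then α else if (i : ℕ) = 2 then ᾱ else 0)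
    else if (j : ℕ) = 2 then (if (i : ℕ) = 0 then ᾱ else if (i : ℕ) = 2 then α else 0)
    else (if (i : ℕ) = (j : ℕ) then -α else if (i : ℕ) + 1 = (j : ℕ) then ᾱ else 0)

namespace Stmt15Aux

/-- ℕ-indexed version of the generator matrix entries. -/
def E (α ᾱ : ℝ) : ℕ → ℕ → ℝ := fun i j =>
  if j = 0 then (if i = 0 then α else if i = 1 then ᾱ else 0)
  else if j = 1 then (if i = 1 then α else if i = 2 then ᾱ else 0)
  else if j = 2 then (if i = 0 then ᾱ else if i = 2 then α else 0)
  else (if i = j then -α else if i + 1 = j then ᾱ else 0)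

lemma E_eq (n : ℕ) (α ᾱ : ℝ) (i j : Fin n) :
    DnAlphaMatrix n α ᾱ i j = E α ᾱ (i : ℕ) (j : ℕ) := rfl

lemma E_diag (α ᾱ : ℝ) (i : ℕ) (hi : 3 ≤ i) : E α ᾱ i i = -α := by
  simp only [E]; split_ifs <;> first | rfl | contradiction | (exfalso; omega)

lemma E_sub (α ᾱ : ℝ) (i : ℕ) (hi : 2 ≤ i) : E α ᾱ i (i+1) = ᾱ := by
  simp only [E]; split_ifs <;> first | rfl | contradiction | (exfalso; omega)

lemma E_zero (α ᾱ : ℝ) (i j : ℕ) (hi : 3 ≤ i) (h1 : j ≠ i) (h2 : j ≠ i + 1) :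
    E α ᾱ i j = 0 := by
  simp only [E]; split_ifs <;> first | rfl | contradiction | (exfalso; omega)

lemma E_zero_col (α ᾱ : ℝ) (i j : ℕ) (hj : 3 ≤ j) (h1 : i ≠ j) (h2 : i + 1 ≠ j) :
    E α ᾱ i j = 0 := by
  simp only [E]; split_ifs <;> first | rfl | contradiction | (exfalso; omega)

lemma rowt_pt (α ᾱ : ℝ) (d : ℕ → ℝ) (i j : ℕ) (hi : 3 ≤ i) :
    d j * E α ᾱ i j
      = (if j = i then -α * d i else 0) + (if j = i + 1 then ᾱ * d (i+1) else 0) := by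
  by_cases h1 : j = i
  · subst h1; rw [if_pos rfl, if_neg (by omega), E_diag _ _ _ hi]; ring
  · by_cases h2 : j = i + 1
    · subst h2; rw [if_neg h1, if_pos rfl, E_sub _ _ _ (by omega)]; ring
    · rw [if_neg h1, if_neg h2, E_zero _ _ _ _ hi h1 h2]; ring

lemma row0_pt (α ᾱ : ℝ) (d : ℕ → ℝ) (j : ℕ) :
    d j * E α ᾱ 0 j = (if j = 0 then α * d 0 else 0) + (if j = 2 then ᾱ * d 2 else 0) := by
  rcases j with _|_|_|j <;> norm_num [E] <;> (try split_ifs) <;>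
    first | ring1 | contradiction | (exfalso; omega) | (subst_vars; norm_num; try ring1)

lemma row1_pt (α ᾱ : ℝ) (d : ℕ → ℝ) (j : ℕ) :
    d j * E α ᾱ 1 j = (if j = 0 then ᾱ * d 0 else 0) + (if j = 1 then α * d 1 else 0) := by
  rcases j with _|_|_|j <;> norm_num [E] <;> (try split_ifs) <;>
    first | ring1 | contradiction | (exfalso; omega) | (subst_vars; norm_num; try ring1)

lemma row2_pt (α ᾱ : ℝ) (d : ℕ → ℝ) (j : ℕ) :
    d j * E α ᾱ 2 j = (if j = 1 then ᾱ * d 1 else 0) + ((if j = 2 then α * d 2 else 0)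
      + (if j = 3 then ᾱ * d 3 else 0)) := by
  rcases j with _|_|_|j <;> norm_num [E] <;> (try split_ifs) <;>
    first | ring1 | contradiction | (exfalso; omega) | (subst_vars; norm_num; try ring1)

section Rows

variable {n : ℕ} (α ᾱ : ℝ) (d : ℕ → ℝ)

lemma rowsum0 (hn : 3 ≤ n) : ∑ j ∈ range n, d j * E α ᾱ 0 j = α * d 0 + ᾱ * d 2 := by
  rw [Finset.sum_congr rfl (fun j _ => row0_pt α ᾱ d j), Finset.sum_add_distrib,
    Finset.sum_ite_eq' (range n) 0 (fun _ => α * d 0),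
    Finset.sum_ite_eq' (range n) 2 (fun _ => ᾱ * d 2)]
  rw [if_pos (mem_range.mpr (by omega)), if_pos (mem_range.mpr (by omega))]

lemma rowsum1 (hn : 3 ≤ n) : ∑ j ∈ range n, d j * E α ᾱ 1 j = ᾱ * d 0 + α * d 1 := by
  rw [Finset.sum_congr rfl (fun j _ => row1_pt α ᾱ d j), Finset.sum_add_distrib,
    Finset.sum_ite_eq' (range n) 0 (fun _ => ᾱ * d 0),
    Finset.sum_ite_eq' (range n) 1 (fun _ => α * d 1)]
  rw [if_pos (mem_range.mpr (by omega)), if_pos (mem_range.mpr (by omega))]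

lemma rowsum2 (hn : 3 ≤ n) (hd : ∀ j, n ≤ j → d j = 0) : ∑ j ∈ range n, d j * E α ᾱ 2 j = ᾱ * d 1 + α * d 2 + ᾱ * d 3 := by
  rw [Finset.sum_congr rfl (fun j _ => row2_pt α ᾱ d j), Finset.sum_add_distrib,
    Finset.sum_add_distrib,
    Finset.sum_ite_eq' (range n) 1 (fun _ => ᾱ * d 1),
    Finset.sum_ite_eq' (range n) 2 (fun _ => α * d 2),
    Finset.sum_ite_eq' (range n) 3 (fun _ => ᾱ * d 3)]
  rw [if_pos (mem_range.mpr (by omega)), if_pos (mem_range.mpr (by omega))]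
  by_cases h3 : 3 < n
  · rw [if_pos (mem_range.mpr h3)]; ring
  · rw [if_neg (fun hm => h3 (mem_range.mp hm)), hd 3 (by omega)]; ring

lemma rowsumt (hd : ∀ j, n ≤ j → d j = 0) (i : ℕ) (hi : 3 ≤ i) (hin : i < n) :
    ∑ j ∈ range n, d j * E α ᾱ i j = ᾱ * d (i+1) - α * d i := by
  rw [Finset.sum_congr rfl (fun j _ => rowt_pt α ᾱ d i j hi), Finset.sum_add_distrib,
    Finset.sum_ite_eq' (range n) i (fun _ => -α * d i),
    Finset.sum_ite_eq' (range n) (i+1) (fun _ => ᾱ * d (i+1))]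
  rw [if_pos (mem_range.mpr hin)]
  by_cases h3 : i + 1 < n
  · rw [if_pos (mem_range.mpr h3)]; ring
  · rw [if_neg (fun hm => h3 (mem_range.mp hm)), hd (i+1) (by omega)]; ring

end Rows

section Cols

variable {n : ℕ} (α ᾱ : ℝ)

lemma colsum (hn : 3 ≤ n) (k : ℕ) (hk : k < n) :
    ∑ r ∈ range n, (E α ᾱ r k)^2 = α^2 + ᾱ^2 := by
  have key : ∀ r1 r2 : ℕ, r1 < n → r2 < n → r1 ≠ r2 →
      (∀ r, (E α ᾱ r k)^2 = (if r = r1 then α^2 else 0) + (if r = r2 then ᾱ^2 else 0)) →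
      ∑ r ∈ range n, (E α ᾱ r k)^2 = α^2 + ᾱ^2 := by
    intro r1 r2 h1 h2 _ hpt
    rw [Finset.sum_congr rfl (fun r _ => hpt r), Finset.sum_add_distrib,
      Finset.sum_ite_eq' (range n) r1 (fun _ => α^2),
      Finset.sum_ite_eq' (range n) r2 (fun _ => ᾱ^2),
      if_pos (mem_range.mpr h1), if_pos (mem_range.mpr h2)]
  rcases k with _|_|_|k
  · exact key 0 1 (by omega) (by omega) (by omega) (fun r => by
      rcases r with _|_|_|r <;> norm_num [E] <;> (try split_ifs) <;>
        first | ring1 | contradiction | (exfalso; omega) | (subst_vars; norm_num; try ring1))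
  · exact key 1 2 (by omega) (by omega) (by omega) (fun r => by
      rcases r with _|_|_|r <;> norm_num [E] <;> (try split_ifs) <;>
        first | ring1 | contradiction | (exfalso; omega) | (subst_vars; norm_num; try ring1))
  · exact key 2 0 (by omega) (by omega) (by omega) (fun r => by
      rcases r with _|_|_|r <;> norm_num [E] <;> (try split_ifs) <;>
        first | ring1 | contradiction | (exfalso; omega) | (subst_vars; norm_num; try ring1))
  · refine key (k+3) (k+2) (by omega) (by omega) (by omega) (fun r => ?_)
    by_cases h1 : r = k + 3
    · subst h1; rw [if_pos rfl, if_neg (by omega), E_diag _ _ _ (by omega)]; ring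
    · by_cases h2 : r = k + 2
      · subst h2
        rw [if_neg h1, if_pos rfl, show k + 3 = (k+2) + 1 from rfl, E_sub _ _ _ (by omega)]
        ring
      · rw [if_neg h1, if_neg h2, E_zero_col _ _ _ _ (by omega) h1 (by omega)]; ring

end Cols

lemma split3 {M : Type*} [AddCommMonoid M] (n : ℕ) (hn : 3 ≤ n) (f : ℕ → M) :
    ∑ i ∈ range n, f i = f 0 + f 1 + f 2 + ∑ i ∈ Ico 3 n, f i := by
  rw [range_eq_Ico, ← Finset.sum_Ico_consecutive _ (by omega : 0 ≤ 3) hn, ← range_eq_Ico]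
  rw [Finset.sum_range_succ, Finset.sum_range_succ, Finset.sum_range_one]

lemma tailid (n : ℕ) (hn : 3 ≤ n) (α ᾱ : ℝ) (hrel : ᾱ^2 = 2 - α^2)
    (g : ℕ → ℝ) (hgn : g n = 0) :
    ∑ i ∈ Ico 3 n, (ᾱ * g (i+1) - α * g i)^2
      = (2 - 2*(α*ᾱ)) * ∑ i ∈ Ico 3 n, (g i)^2
        + (α*ᾱ) * ∑ i ∈ Ico 3 n, (g (i+1) - g i)^2 + (α*ᾱ - ᾱ^2) * (g 3)^2 := by
  have key : ∀ i ∈ Ico 3 n, (ᾱ * g (i+1) - α * g i)^2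
      = (2 - 2*(α*ᾱ))*(g i)^2 + (α*ᾱ)*(g (i+1) - g i)^2
        + (ᾱ^2 - α*ᾱ)*((g (i+1))^2 - (g i)^2) := by
    intro i _; linear_combination (g i^2) * hrel
  rw [Finset.sum_congr rfl key, Finset.sum_add_distrib, Finset.sum_add_distrib,
    ← Finset.mul_sum, ← Finset.mul_sum, ← Finset.mul_sum]
  have tel : ∑ i ∈ Ico 3 n, ((g (i+1))^2 - (g i)^2) = - (g 3)^2 := by
    rw [Finset.sum_Ico_eq_sub _ hn, Finset.sum_range_sub (fun i => (g i)^2),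
      Finset.sum_range_sub (fun i => (g i)^2), hgn]
    ring
  rw [tel]; ring

lemma int_abs_le_sq (a : ℤ) : |a| ≤ a^2 := by
  rcases eq_or_ne a 0 with h | h
  · simp [h]
  · have h1 : 1 ≤ |a| := Int.one_le_abs h
    calc |a| = |a| * 1 := by ring
    _ ≤ |a| * |a| := by nlinarith
    _ = a^2 := by rw [← abs_mul, abs_mul_self a, sq]

lemma tail_ge (n : ℕ) (hn : 3 ≤ n) (h : ℕ → ℤ) (hhn : h n = 0) :
    |h 3| ≤ ∑ i ∈ Ico 3 n, (h (i+1) - h i)^2 := by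
  have tel : ∑ i ∈ Ico 3 n, (h (i+1) - h i) = - h 3 := by
    rw [Finset.sum_Ico_eq_sub _ hn, Finset.sum_range_sub (fun i => h i),
      Finset.sum_range_sub (fun i => h i), hhn]
    ring
  calc |h 3| = |∑ i ∈ Ico 3 n, (h (i+1) - h i)| := by rw [tel, abs_neg]
  _ ≤ ∑ i ∈ Ico 3 n, |h (i+1) - h i| := Finset.abs_sum_le_sum_abs _ _
  _ ≤ ∑ i ∈ Ico 3 n, (h (i+1) - h i)^2 :=
      Finset.sum_le_sum (fun i _ => int_abs_le_sq _)

lemma head_ge (a b e g : ℤ) (h : 1 ≤ b * g) :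
    2 + 2*(b*g) ≤ (a+e)^2 + (a+b)^2 + (b+e+g)^2 + |g| := by
  rcases mul_pos_iff.mp (by linarith : (0:ℤ) < b * g) with ⟨hb, hg⟩ | ⟨hb, hg⟩
  · rw [abs_of_pos hg]
    nlinarith [sq_nonneg (2*a+b+e), sq_nonneg (a+b+2*e+g), sq_nonneg (a-e-g),
      sq_nonneg (b-g), sq_nonneg (b-1), hb, hg]
  · rw [abs_of_neg hg]
    nlinarith [sq_nonneg (2*a+b+e), sq_nonneg (a+b+2*e+g), sq_nonneg (a-e-g),
      sq_nonneg (b-g), sq_nonneg (b+1), hb, hg]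

lemma cz_le_aux (α ᾱ C Y P Q : ℝ) (hᾱ0 : 0 < ᾱ) (hαᾱ : ᾱ < α) (hβ0 : 0 < α*ᾱ)
    (hQ : Q = (2 - 2*(α*ᾱ))*C + (α*ᾱ)*Y + 2*ᾱ*(ᾱ-α)*P) (hQ2 : Q ≤ 2)
    (hY2 : 2 ≤ Y) (hcase : P ≤ 0 ∨ (0 ≤ P ∧ 2 + 2*P ≤ Y)) :
    (2 - 2*(α*ᾱ))*C + 2*(α*ᾱ) ≤ 2 := by
  rcases hcase with hP | ⟨hP0, hPY⟩
  · nlinarith [mul_nonneg hβ0.le (by linarith : (0:ℝ) ≤ Y - 2),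
      mul_nonneg (mul_nonneg (by linarith : (0:ℝ) ≤ 2*ᾱ)
        (by linarith : (0:ℝ) ≤ α - ᾱ)) (by linarith : (0:ℝ) ≤ -P)]
  · nlinarith [mul_nonneg hβ0.le (by linarith : (0:ℝ) ≤ Y - 2 - 2*P),
      mul_nonneg (mul_nonneg hᾱ0.le hᾱ0.le) hP0]

lemma norm_sq_eq {n : ℕ} (v : EuclideanSpace ℝ (Fin n)) :
    ‖v‖^2 = ∑ i : Fin n, (v i)^2 := by
  rw [EuclideanSpace.norm_eq]
  rw [Real.sq_sqrt (by positivity)]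
  congr 1; ext i; rw [Real.norm_eq_abs, sq_abs]

end Stmt15Aux

set_option maxHeartbeats 1600000 in
theorem stmt_15 (n : ℕ) (hn : 3 ≤ n) (α ᾱ : ℝ)
    (hα : 1 < α) (hα' : α < Real.sqrt 2) (hᾱ : ᾱ = Real.sqrt (2 - α ^ 2))
    (b : Fin n → EuclideanSpace ℝ (Fin n))
    (hb : ∀ i row, b i row = DnAlphaMatrix n α ᾱ row i) :
    (∀ i, ‖b i‖ ^ 2 = 2) ∧
      ∀ c : Fin n → ℤ, (∃ i, c i ≠ 0) →
        ‖∑ j, (c j : ℝ) • b j‖ ^ 2 ≤ 2 →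
        ∃ i, (∑ j, (c j : ℝ) • b j) = b i ∨ (∑ j, (c j : ℝ) • b j) = -b i := by
  classical
  obtain ⟨hα0, h2α, hrel, hᾱ0, hᾱ1, hβ0, hβ1⟩ :
      0 < α ∧ α^2 < 2 ∧ ᾱ^2 = 2 - α^2 ∧ 0 < ᾱ ∧ ᾱ < 1 ∧ 0 < α*ᾱ ∧ α*ᾱ < 1 := by
    have hα0 : 0 < α := lt_trans one_pos hα
    have hs : (Real.sqrt 2)^2 = 2 := Real.sq_sqrt (by norm_num)
    have h2α : α^2 < 2 := by nlinarith [Real.sqrt_nonneg 2]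
    have hrel : ᾱ^2 = 2 - α^2 := by rw [hᾱ]; exact Real.sq_sqrt (by nlinarith)
    have hᾱ0 : 0 < ᾱ := by rw [hᾱ]; exact Real.sqrt_pos.mpr (by nlinarith)
    have hᾱ1 : ᾱ < 1 := by nlinarith
    refine ⟨hα0, h2α, hrel, hᾱ0, hᾱ1, by positivity, ?_⟩
    nlinarith [sq_nonneg (α^2 - 1)]
  constructor
  · -- norms of basis vectors
    intro i
    rw [Stmt15Aux.norm_sq_eq (b i)]
    have h1 : ∀ r : Fin n, (b i r)^2 = (fun rn : ℕ => (Stmt15Aux.E α ᾱ rn (i:ℕ))^2) (r:ℕ) := by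
      intro r; rw [hb i r, Stmt15Aux.E_eq]
    rw [Finset.sum_congr rfl (fun r _ => h1 r),
      Fin.sum_univ_eq_sum_range (fun rn : ℕ => (Stmt15Aux.E α ᾱ rn (i:ℕ))^2) n,
      Stmt15Aux.colsum α ᾱ hn (i:ℕ) i.isLt]
    linarith
  · -- minimal vectors
    intro c hc hnorm
    set v : EuclideanSpace ℝ (Fin n) := ∑ j, (c j : ℝ) • b j with hv
    set c' : ℕ → ℤ := fun j => if h : j < n then c ⟨j, h⟩ else 0 with hc'
    set d : ℕ → ℝ := fun j => (c' j : ℝ) with hdd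
    have hd : ∀ j, n ≤ j → d j = 0 := by
      intro j hj; simp only [hdd, hc']; rw [dif_neg (by omega)]; norm_num
    have hcd : ∀ j : Fin n, (c j : ℝ) = d (j : ℕ) := by
      intro j; simp only [hdd, hc']; rw [dif_pos j.isLt]
    have hcz : ∀ j : Fin n, c' (j : ℕ) = c j := by
      intro j; simp only [hc']; rw [dif_pos j.isLt]
    -- coordinates of v
    have hvr : ∀ r : Fin n, v r = ∑ j ∈ range n, d j * Stmt15Aux.E α ᾱ (r:ℕ) j := by
      intro r
      have h1 : v r = ∑ j : Fin n, (c j : ℝ) * b j r := by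
        rw [hv]; rw [WithLp.ofLp_sum, Finset.sum_apply]; exact Finset.sum_congr rfl (fun j _ => rfl)
      rw [h1]
      have h2 : ∀ j : Fin n, (c j : ℝ) * b j r
          = (fun jn : ℕ => d jn * Stmt15Aux.E α ᾱ (r:ℕ) jn) (j : ℕ) := by
        intro j; rw [hb j r, Stmt15Aux.E_eq, hcd j]
      rw [Finset.sum_congr rfl (fun j _ => h2 j),
        Fin.sum_univ_eq_sum_range (fun jn : ℕ => d jn * Stmt15Aux.E α ᾱ (r:ℕ) jn) n]
    -- squared norm as a sum over rows
    have hQ : ‖v‖^2 = ∑ r ∈ range n,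
        (∑ j ∈ range n, d j * Stmt15Aux.E α ᾱ r j)^2 := by
      rw [Stmt15Aux.norm_sq_eq v]
      have h1 : ∀ r : Fin n, (v r)^2
          = (fun rn : ℕ => (∑ j ∈ range n, d j * Stmt15Aux.E α ᾱ rn j)^2) (r : ℕ) := by
        intro r; rw [hvr r]
      rw [Finset.sum_congr rfl (fun r _ => h1 r),
        Fin.sum_univ_eq_sum_range (fun rn : ℕ => (∑ j ∈ range n, d j * Stmt15Aux.E α ᾱ rn j)^2) n]
    -- integer quantities
    set Cz : ℤ := ∑ i ∈ range n, (c' i)^2 with hCz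
    set Yt : ℤ := ∑ i ∈ Ico 3 n, (c' (i+1) - c' i)^2 with hYt
    set Yz : ℤ := (c' 0 + c' 2)^2 + (c' 0 + c' 1)^2 + (c' 1 + c' 2 + c' 3)^2 + Yt with hYz
    have hcn : c' n = 0 := by simp only [hc']; rw [dif_neg (by omega)]
    -- the central identity
    have hQid : ‖v‖^2 = (2 - 2*(α*ᾱ))*(Cz:ℝ) + (α*ᾱ)*(Yz:ℝ)
        + 2*ᾱ*(ᾱ-α)*((c' 1 * c' 3 : ℤ):ℝ) := by
      rw [hQ, Stmt15Aux.split3 n hn]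
      rw [Stmt15Aux.rowsum0 α ᾱ d hn, Stmt15Aux.rowsum1 α ᾱ d hn,
        Stmt15Aux.rowsum2 α ᾱ d hn hd]
      have htail : ∑ i ∈ Ico 3 n, (∑ j ∈ range n, d j * Stmt15Aux.E α ᾱ i j)^2
          = ∑ i ∈ Ico 3 n, (ᾱ * d (i+1) - α * d i)^2 := by
        refine Finset.sum_congr rfl (fun i hi => ?_)
        obtain ⟨h1, h2⟩ := Finset.mem_Ico.mp hi
        rw [Stmt15Aux.rowsumt α ᾱ d hd i h1 h2]
      rw [htail, Stmt15Aux.tailid n hn α ᾱ hrel d (hd n le_rfl)]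
      have hCcast : (Cz:ℝ) = d 0^2 + d 1^2 + d 2^2 + ∑ i ∈ Ico 3 n, (d i)^2 := by
        rw [hCz]; push_cast
        rw [Stmt15Aux.split3 n hn (fun i => (d i)^2)]
      have hYcast : (Yz:ℝ) = (d 0 + d 2)^2 + (d 0 + d 1)^2 + (d 1 + d 2 + d 3)^2
          + ∑ i ∈ Ico 3 n, (d (i+1) - d i)^2 := by
        rw [hYz, hYt]; push_cast; ring
      rw [hCcast, hYcast]
      push_cast
      linear_combination (d 0^2 + d 1^2 + d 2^2) * hrel
    -- lower bound for Yz : Yz ≥ 2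
    obtain ⟨k0, hk0⟩ := hc
    have hck0 : c' (k0 : ℕ) ≠ 0 := by rw [hcz k0]; exact hk0
    set z : ℕ → ℤ := fun i => if i = 0 then c' 0 + c' 2 else if i = 1 then c' 0 + c' 1
      else if i = 2 then c' 1 + c' 2 + c' 3 else c' (i+1) - c' i with hz
    have hz0 : z 0 = c' 0 + c' 2 := by simp [hz]
    have hz1 : z 1 = c' 0 + c' 1 := by simp [hz]
    have hz2 : z 2 = c' 1 + c' 2 + c' 3 := by simp [hz]
    have hzt : ∀ i, 3 ≤ i → z i = c' (i+1) - c' i := by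
      intro i hi; simp only [hz]
      rw [if_neg (by omega), if_neg (by omega), if_neg (by omega)]
    have hYzsum : Yz = ∑ i ∈ range n, (z i)^2 := by
      rw [Stmt15Aux.split3 n hn (fun i => (z i)^2), hz0, hz1, hz2, hYz, hYt]
      have : ∑ i ∈ Ico 3 n, (z i)^2 = ∑ i ∈ Ico 3 n, (c' (i+1) - c' i)^2 := by
        refine Finset.sum_congr rfl (fun i hi => ?_)
        rw [hzt i (Finset.mem_Ico.mp hi).1]
      rw [this]
    have hYeven : Even Yz := by
      have h1 : ∀ i ∈ range n, Even ((z i)^2 - z i) := by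
        intro i _
        have := Int.even_mul_succ_self (z i - 1)
        have h2 : (z i - 1) * (z i - 1 + 1) = (z i)^2 - z i := by ring
        rwa [h2] at this
      have h2 : Even (∑ i ∈ range n, ((z i)^2 - z i)) := Finset.even_sum _ h1
      have h3 : ∑ i ∈ range n, ((z i)^2 - z i)
          = ∑ i ∈ range n, (z i)^2 - ∑ i ∈ range n, z i := Finset.sum_sub_distrib _ _
      have h4 : ∑ i ∈ range n, z i = 2*(c' 0 + c' 1 + c' 2) := by
        rw [Stmt15Aux.split3 n hn z, hz0, hz1, hz2]
        have h5 : ∑ i ∈ Ico 3 n, z i = ∑ i ∈ Ico 3 n, (c' (i+1) - c' i) := by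
          refine Finset.sum_congr rfl (fun i hi => ?_)
          rw [hzt i (Finset.mem_Ico.mp hi).1]
        have h6 : ∑ i ∈ Ico 3 n, (c' (i+1) - c' i) = c' n - c' 3 := by
          rw [Finset.sum_Ico_eq_sub _ hn, Finset.sum_range_sub (fun i => c' i),
            Finset.sum_range_sub (fun i => c' i)]
          ring
        rw [h5, h6, hcn]; ring
      rw [hYzsum]
      have h7 : ∑ i ∈ range n, (z i)^2
          = ∑ i ∈ range n, ((z i)^2 - z i) + ∑ i ∈ range n, z i := by
        rw [h3]; ring
      rw [h7, h4]
      exact h2.add ⟨c' 0 + c' 1 + c' 2, by ring⟩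
    have hznz : ∃ i ∈ range n, z i ≠ 0 := by
      by_contra hcon
      push_neg at hcon
      have htail0 : ∀ i, 3 ≤ i → i ≤ n → c' i = 0 := by
        intro i hi3 hin
        have h6 : ∑ j ∈ Ico i n, (c' (j+1) - c' j) = c' n - c' i := by
          rw [Finset.sum_Ico_eq_sub _ hin, Finset.sum_range_sub (fun j => c' j),
            Finset.sum_range_sub (fun j => c' j)]
          ring
        have h7 : ∑ j ∈ Ico i n, (c' (j+1) - c' j) = 0 := by
          refine Finset.sum_eq_zero (fun j hj => ?_)
          obtain ⟨hj1, hj2⟩ := Finset.mem_Ico.mp hj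
          rw [← hzt j (by omega)]
          exact hcon j (mem_range.mpr hj2)
        rw [h7] at h6; omega
      have h30 : c' 3 = 0 := by
        rcases Nat.lt_or_ge 3 n with h | h
        · exact htail0 3 le_rfl (by omega)
        · simp only [hc']; rw [dif_neg (by omega)]
      have hz00 := hcon 0 (mem_range.mpr (by omega)); rw [hz0] at hz00
      have hz10 := hcon 1 (mem_range.mpr (by omega)); rw [hz1] at hz10
      have hz20 := hcon 2 (mem_range.mpr (by omega)); rw [hz2] at hz20
      have hk3 : (k0 : ℕ) < n := k0.isLt
      rcases Nat.lt_or_ge (k0 : ℕ) 3 with h | h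
      · have hk : (k0 : ℕ) = 0 ∨ (k0 : ℕ) = 1 ∨ (k0 : ℕ) = 2 := by omega
        rcases hk with h' | h' | h' <;> rw [h'] at hck0 <;> omega
      · exact hck0 (htail0 _ h (by omega))
    have hYlb : 2 ≤ Yz := by
      obtain ⟨i0, hi0m, hi0⟩ := hznz
      have h1 : 1 ≤ (z i0)^2 := by rcases hi0.lt_or_gt with h | h <;> nlinarith
      have h2 : (z i0)^2 ≤ Yz := by
        rw [hYzsum]
        exact Finset.single_le_sum (f := fun i => (z i)^2) (fun i _ => sq_nonneg _) hi0m
      have h5 : 1 ≤ Yz := le_trans h1 h2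
      obtain ⟨t, ht⟩ := hYeven
      omega
    -- the bound Cz ≤ 1
    have hC1 : Cz ≤ 1 := by
      have key : (2 - 2*(α*ᾱ))*(Cz:ℝ) + 2*(α*ᾱ) ≤ 2 := by
        have hY2 : (2:ℝ) ≤ (Yz:ℝ) := by exact_mod_cast hYlb
        refine Stmt15Aux.cz_le_aux α ᾱ (Cz:ℝ) (Yz:ℝ) ((c' 1 * c' 3 : ℤ):ℝ) (‖v‖^2)
          hᾱ0 (by linarith) hβ0 hQid hnorm hY2 ?_
        rcases le_or_gt (c' 1 * c' 3) 0 with hP | hP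
        · left; exact_mod_cast hP
        · right
          have hP1 : 1 ≤ c' 1 * c' 3 := hP
          constructor
          · exact_mod_cast le_of_lt hP
          · have h2 : 2 + 2*(c' 1 * c' 3) ≤ Yz := by
              have hhead := Stmt15Aux.head_ge (c' 0) (c' 1) (c' 2) (c' 3) hP1
              have htail := Stmt15Aux.tail_ge n hn c' hcn
              rw [hYz]
              calc 2 + 2*(c' 1 * c' 3)
                  ≤ (c' 0 + c' 2)^2 + (c' 0 + c' 1)^2 + (c' 1 + c' 2 + c' 3)^2 + |c' 3| := by
                    linarith [hhead]
                _ ≤ _ := by rw [hYt]; linarith [htail]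
            exact_mod_cast h2
      have hCreal : (Cz:ℝ) ≤ 1 := by nlinarith [key, hβ1]
      exact_mod_cast hCreal
    -- Cz = 1 forces c = ± a standard basis vector
    have hCfin : ∑ j : Fin n, (c j)^2 = Cz := by
      rw [hCz]
      have h1 : ∀ j : Fin n, (c j)^2 = (fun i : ℕ => (c' i)^2) (j : ℕ) := by
        intro j
        show (c j)^2 = (c' (j:ℕ))^2
        rw [hcz j]
      rw [Finset.sum_congr rfl (fun j _ => h1 j),
        Fin.sum_univ_eq_sum_range (fun i : ℕ => (c' i)^2) n]
    have hk0sq : 1 ≤ (c k0)^2 := by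
      have h0 : 0 < (c k0)^2 := by positivity
      linarith
    have hrest : ∑ j ∈ Finset.univ.erase k0, (c j)^2 = 0 := by
      have h1 : (c k0)^2 + ∑ j ∈ Finset.univ.erase k0, (c j)^2 = ∑ j : Fin n, (c j)^2 :=
        Finset.add_sum_erase _ (fun j => (c j)^2) (Finset.mem_univ k0)
      have h2 : 0 ≤ ∑ j ∈ Finset.univ.erase k0, (c j)^2 :=
        Finset.sum_nonneg (fun j _ => sq_nonneg _)
      have h3 : ∑ j : Fin n, (c j)^2 ≤ 1 := by rw [hCfin]; exact hC1
      have h4 : ∑ j ∈ Finset.univ.erase k0, (c j)^2 ≤ 0 := by linarith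
      exact le_antisymm h4 h2
    have hcj0 : ∀ j : Fin n, j ≠ k0 → c j = 0 := by
      intro j hj
      have h1 := (Finset.sum_eq_zero_iff_of_nonneg
        (fun i _ => sq_nonneg (c i))).mp hrest j
        (Finset.mem_erase.mpr ⟨hj, Finset.mem_univ j⟩)
      exact pow_eq_zero_iff (by norm_num) |>.mp h1
    have hck1 : (c k0)^2 = 1 := by
      have h1 : (c k0)^2 + ∑ j ∈ Finset.univ.erase k0, (c j)^2 = ∑ j : Fin n, (c j)^2 :=
        Finset.add_sum_erase _ (fun j => (c j)^2) (Finset.mem_univ k0)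
      have h3 : ∑ j : Fin n, (c j)^2 ≤ 1 := by rw [hCfin]; exact hC1
      have h2 : 0 ≤ ∑ j ∈ Finset.univ.erase k0, (c j)^2 :=
        Finset.sum_nonneg (fun j _ => sq_nonneg _)
      linarith
    have hvk : v = (c k0 : ℝ) • b k0 := by
      rw [hv]
      refine Finset.sum_eq_single_of_mem k0 (Finset.mem_univ k0) ?_
      intro j _ hj
      rw [hcj0 j hj]
      simp
    have hpm : c k0 = 1 ∨ c k0 = -1 := by
      have h1 : c k0 * c k0 = 1 := by nlinarith [hck1]
      exact Int.isUnit_iff.mp (IsUnit.of_mul_eq_one _ h1)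
    refine ⟨k0, ?_⟩
    rcases hpm with h1 | h1
    · left; rw [hvk, h1]; norm_num
    · right; rw [hvk, h1]; norm_num
end

section
/- Let ᾱ = √(2-α²) with 1 ≤ α ≤ √2. The determinant of the 8×8 generator matrix M_{E₈^α} of the deformed E₈ lattice satisfies |det M_{E₈^α}| = (1/2)(ᾱ²(α-ᾱ)(α⁴+α²ᾱ²+ᾱ⁴) + α⁶(α+ᾱ)). -/
set_option maxHeartbeats 1600000
set_option maxRecDepth 20000

private lemma detQ6' (c x y : ℝ) :
    (!![c, x, 0, 0, 0, 0;
        c, y, x, 0, 0, 0;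
        c, 0, y, x, 0, 0;
        c, 0, 0, y, x, 0;
        -c, 0, 0, 0, y, x;
        c, 0, 0, 0, 0, y] : Matrix (Fin 6) (Fin 6) ℝ).det =
      c*(y^5 - x*y^4 + x^2*y^3 - x^3*y^2 - x^4*y - x^5) := by
  simp [Matrix.det_succ_row_zero, Fin.sum_univ_succ, Fin.succAbove]
  ring

private lemma detP6' (x y : ℝ) :
    (!![y, x, 0, 0, 0, 0;
        0, y, x, 0, 0, 0;
        0, 0, y, x, 0, 0;
        0, 0, 0, y, x, 0;
        0, 0, 0, 0, y, x;
        0, 0, 0, 0, 0, y] : Matrix (Fin 6) (Fin 6) ℝ).det = y^6 := by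
  simp [Matrix.det_succ_row_zero, Fin.sum_univ_succ]
  ring

private lemma detZ6' (x y : ℝ) :
    (!![0, x, 0, 0, 0, 0;
        0, y, x, 0, 0, 0;
        0, 0, y, x, 0, 0;
        0, 0, 0, y, x, 0;
        0, 0, 0, 0, y, x;
        0, 0, 0, 0, 0, y] : Matrix (Fin 6) (Fin 6) ℝ).det = 0 := by
  apply Matrix.det_eq_zero_of_column_eq_zero 0
  intro i
  fin_cases i <;> rfl

private lemma detP7' (x y : ℝ) :
    (!![y, x, 0, 0, 0, 0, 0;
        0, y, x, 0, 0, 0, 0;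
        0, 0, y, x, 0, 0, 0;
        0, 0, 0, y, x, 0, 0;
        0, 0, 0, 0, y, x, 0;
        0, 0, 0, 0, 0, y, x;
        0, 0, 0, 0, 0, 0, y] : Matrix (Fin 7) (Fin 7) ℝ).det = y^7 := by
  rw [Matrix.det_succ_row_zero]
  simp only [Fin.sum_univ_succ, Fin.sum_univ_zero]
  norm_num [Matrix.cons_val', Matrix.cons_val_zero, Matrix.cons_val_one, Matrix.head_cons,
    Matrix.head_fin_const, Matrix.cons_val_fin_one, Matrix.empty_val', Matrix.cons_val_two, Matrix.tail_cons]
  have e1 : (!![y, x, 0, 0, 0, 0, 0;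
        0, y, x, 0, 0, 0, 0;
        0, 0, y, x, 0, 0, 0;
        0, 0, 0, y, x, 0, 0;
        0, 0, 0, 0, y, x, 0;
        0, 0, 0, 0, 0, y, x;
        0, 0, 0, 0, 0, 0, y] : Matrix (Fin 7) (Fin 7) ℝ).submatrix Fin.succ Fin.succ =
      !![y, x, 0, 0, 0, 0;
        0, y, x, 0, 0, 0;
        0, 0, y, x, 0, 0;
        0, 0, 0, y, x, 0;
        0, 0, 0, 0, y, x;
        0, 0, 0, 0, 0, y] := by
    ext i j; fin_cases i <;> fin_cases j <;> rfl
  have e2 : (!![y, x, 0, 0, 0, 0, 0;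
        0, y, x, 0, 0, 0, 0;
        0, 0, y, x, 0, 0, 0;
        0, 0, 0, y, x, 0, 0;
        0, 0, 0, 0, y, x, 0;
        0, 0, 0, 0, 0, y, x;
        0, 0, 0, 0, 0, 0, y] : Matrix (Fin 7) (Fin 7) ℝ).submatrix Fin.succ
          (Fin.succAbove 1) =
      !![0, x, 0, 0, 0, 0;
        0, y, x, 0, 0, 0;
        0, 0, y, x, 0, 0;
        0, 0, 0, y, x, 0;
        0, 0, 0, 0, y, x;
        0, 0, 0, 0, 0, y] := by
    ext i j; fin_cases i <;> fin_cases j <;> rfl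
  rw [e1, e2, detP6', detZ6']
  ring

private lemma detQ7' (c x y : ℝ) :
    (!![c, x, 0, 0, 0, 0, 0;
        c, y, x, 0, 0, 0, 0;
        c, 0, y, x, 0, 0, 0;
        c, 0, 0, y, x, 0, 0;
        c, 0, 0, 0, y, x, 0;
        -c, 0, 0, 0, 0, y, x;
        c, 0, 0, 0, 0, 0, y] : Matrix (Fin 7) (Fin 7) ℝ).det =
      c*(y^6 - x*(y^5 - x*y^4 + x^2*y^3 - x^3*y^2 - x^4*y - x^5)) := by
  rw [Matrix.det_succ_row_zero]
  simp only [Fin.sum_univ_succ, Fin.sum_univ_zero]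
  norm_num [Matrix.cons_val', Matrix.cons_val_zero, Matrix.cons_val_one, Matrix.head_cons,
    Matrix.head_fin_const, Matrix.cons_val_fin_one, Matrix.empty_val', Matrix.cons_val_two, Matrix.tail_cons]
  have e1 : (!![c, x, 0, 0, 0, 0, 0;
        c, y, x, 0, 0, 0, 0;
        c, 0, y, x, 0, 0, 0;
        c, 0, 0, y, x, 0, 0;
        c, 0, 0, 0, y, x, 0;
        -c, 0, 0, 0, 0, y, x;
        c, 0, 0, 0, 0, 0, y] : Matrix (Fin 7) (Fin 7) ℝ).submatrix Fin.succ Fin.succ =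
      !![y, x, 0, 0, 0, 0;
        0, y, x, 0, 0, 0;
        0, 0, y, x, 0, 0;
        0, 0, 0, y, x, 0;
        0, 0, 0, 0, y, x;
        0, 0, 0, 0, 0, y] := by
    ext i j; fin_cases i <;> fin_cases j <;> rfl
  have e2 : (!![c, x, 0, 0, 0, 0, 0;
        c, y, x, 0, 0, 0, 0;
        c, 0, y, x, 0, 0, 0;
        c, 0, 0, y, x, 0, 0;
        c, 0, 0, 0, y, x, 0;
        -c, 0, 0, 0, 0, y, x;
        c, 0, 0, 0, 0, 0, y] : Matrix (Fin 7) (Fin 7) ℝ).submatrix Fin.succ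
          (Fin.succAbove 1) =
      !![c, x, 0, 0, 0, 0;
        c, y, x, 0, 0, 0;
        c, 0, y, x, 0, 0;
        c, 0, 0, y, x, 0;
        -c, 0, 0, 0, y, x;
        c, 0, 0, 0, 0, y] := by
    ext i j; fin_cases i <;> fin_cases j <;> rfl
  rw [e1, e2, detP6', detQ6']
  ring

private lemma detQ8' (c x y : ℝ) :
    (!![c, x, 0, 0, 0, 0, 0, 0;
        c, y, x, 0, 0, 0, 0, 0;
        c, 0, y, x, 0, 0, 0, 0;
        c, 0, 0, y, x, 0, 0, 0;
        c, 0, 0, 0, y, x, 0, 0;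
        c, 0, 0, 0, 0, y, x, 0;
        -c, 0, 0, 0, 0, 0, y, x;
        c, 0, 0, 0, 0, 0, 0, y] : Matrix (Fin 8) (Fin 8) ℝ).det =
      c*(y^7 - x*(y^6 - x*(y^5 - x*y^4 + x^2*y^3 - x^3*y^2 - x^4*y - x^5))) := by
  rw [Matrix.det_succ_row_zero]
  simp only [Fin.sum_univ_succ, Fin.sum_univ_zero]
  norm_num [Matrix.cons_val', Matrix.cons_val_zero, Matrix.cons_val_one, Matrix.head_cons,
    Matrix.head_fin_const, Matrix.cons_val_fin_one, Matrix.empty_val', Matrix.cons_val_two, Matrix.tail_cons]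
  have e1 : (!![c, x, 0, 0, 0, 0, 0, 0;
        c, y, x, 0, 0, 0, 0, 0;
        c, 0, y, x, 0, 0, 0, 0;
        c, 0, 0, y, x, 0, 0, 0;
        c, 0, 0, 0, y, x, 0, 0;
        c, 0, 0, 0, 0, y, x, 0;
        -c, 0, 0, 0, 0, 0, y, x;
        c, 0, 0, 0, 0, 0, 0, y] : Matrix (Fin 8) (Fin 8) ℝ).submatrix Fin.succ Fin.succ =
      !![y, x, 0, 0, 0, 0, 0;
        0, y, x, 0, 0, 0, 0;
        0, 0, y, x, 0, 0, 0;
        0, 0, 0, y, x, 0, 0;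
        0, 0, 0, 0, y, x, 0;
        0, 0, 0, 0, 0, y, x;
        0, 0, 0, 0, 0, 0, y] := by
    ext i j; fin_cases i <;> fin_cases j <;> rfl
  have e2 : (!![c, x, 0, 0, 0, 0, 0, 0;
        c, y, x, 0, 0, 0, 0, 0;
        c, 0, y, x, 0, 0, 0, 0;
        c, 0, 0, y, x, 0, 0, 0;
        c, 0, 0, 0, y, x, 0, 0;
        c, 0, 0, 0, 0, y, x, 0;
        -c, 0, 0, 0, 0, 0, y, x;
        c, 0, 0, 0, 0, 0, 0, y] : Matrix (Fin 8) (Fin 8) ℝ).submatrix Fin.succ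
          (Fin.succAbove 1) =
      !![c, x, 0, 0, 0, 0, 0;
        c, y, x, 0, 0, 0, 0;
        c, 0, y, x, 0, 0, 0;
        c, 0, 0, y, x, 0, 0;
        c, 0, 0, 0, y, x, 0;
        -c, 0, 0, 0, 0, y, x;
        c, 0, 0, 0, 0, 0, y] := by
    ext i j; fin_cases i <;> fin_cases j <;> rfl
  rw [e1, e2, detP7', detQ7']
  ring

/-- Generator matrix of the deformed `E₈` lattice: first column `(1,1,1,1,1,1,-1,1)ᵀ/2`,
and for `j ≥ 2`, column `j` has entry `α` in row `j-1` and `ᾱ` in row `j`. -/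
noncomputable def E8AlphaMatrix (α ᾱ : ℝ) : Matrix (Fin 8) (Fin 8) ℝ :=
  (1 / 2 : ℝ) • !![1, 2*α, 0, 0, 0, 0, 0, 0;
                   1, 2*ᾱ, 2*α, 0, 0, 0, 0, 0;
                   1, 0, 2*ᾱ, 2*α, 0, 0, 0, 0;
                   1, 0, 0, 2*ᾱ, 2*α, 0, 0, 0;
                   1, 0, 0, 0, 2*ᾱ, 2*α, 0, 0;
                   1, 0, 0, 0, 0, 2*ᾱ, 2*α, 0;
                   -1, 0, 0, 0, 0, 0, 2*ᾱ, 2*α;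
                   1, 0, 0, 0, 0, 0, 0, 2*ᾱ]

theorem stmt_16 (α ᾱ : ℝ) (hα : 1 ≤ α) (hα' : α ≤ Real.sqrt 2)
    (hᾱ : ᾱ = Real.sqrt (2 - α ^ 2)) :
    |(E8AlphaMatrix α ᾱ).det| =
      (1 / 2) * (ᾱ ^ 2 * (α - ᾱ) * (α ^ 4 + α ^ 2 * ᾱ ^ 2 + ᾱ ^ 4) + α ^ 6 * (α + ᾱ)) := by
  have hE : E8AlphaMatrix α ᾱ =
      !![(1/2 : ℝ), α, 0, 0, 0, 0, 0, 0;
         1/2, ᾱ, α, 0, 0, 0, 0, 0;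
         1/2, 0, ᾱ, α, 0, 0, 0, 0;
         1/2, 0, 0, ᾱ, α, 0, 0, 0;
         1/2, 0, 0, 0, ᾱ, α, 0, 0;
         1/2, 0, 0, 0, 0, ᾱ, α, 0;
         -(1/2), 0, 0, 0, 0, 0, ᾱ, α;
         1/2, 0, 0, 0, 0, 0, 0, ᾱ] := by
    rw [E8AlphaMatrix]
    simp only [Matrix.smul_of, Matrix.smul_cons, Matrix.smul_empty, smul_eq_mul]
    norm_num
    simp only [show (1:ℝ)/2*(2*α) = α from by ring, show (1:ℝ)/2*(2*ᾱ) = ᾱ from by ring, and_self]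
  have hdet : (E8AlphaMatrix α ᾱ).det =
      -((1 / 2) * (ᾱ ^ 2 * (α - ᾱ) * (α ^ 4 + α ^ 2 * ᾱ ^ 2 + ᾱ ^ 4) + α ^ 6 * (α + ᾱ))) := by
    rw [hE, detQ8' (1/2) α ᾱ]
    ring
  have hb0 : 0 ≤ ᾱ := hᾱ ▸ Real.sqrt_nonneg _
  have hba : ᾱ ≤ α := by
    rw [hᾱ]
    have h2 : α ^ 2 ≤ 2 := by
      nlinarith [Real.sq_sqrt (by norm_num : (0:ℝ) ≤ 2), Real.sqrt_nonneg 2,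
        sq_nonneg (Real.sqrt 2 - α)]
    have h3 : 2 - α ^ 2 ≤ α ^ 2 := by nlinarith
    calc Real.sqrt (2 - α ^ 2) ≤ Real.sqrt (α ^ 2) := Real.sqrt_le_sqrt h3
      _ = α := Real.sqrt_sq (by linarith)
  have h1 : (0:ℝ) ≤ α := by linarith
  have hfac : (0:ℝ) ≤ α ^ 4 + α ^ 2 * ᾱ ^ 2 + ᾱ ^ 4 := by positivity
  have hrhs : 0 ≤ (1 / 2) * (ᾱ ^ 2 * (α - ᾱ) * (α ^ 4 + α ^ 2 * ᾱ ^ 2 + ᾱ ^ 4) + α ^ 6 * (α + ᾱ)) := by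
    have t1 : (0:ℝ) ≤ ᾱ ^ 2 * (α - ᾱ) * (α ^ 4 + α ^ 2 * ᾱ ^ 2 + ᾱ ^ 4) :=
      mul_nonneg (mul_nonneg (sq_nonneg _) (by linarith)) hfac
    have t2 : (0:ℝ) ≤ α ^ 6 * (α + ᾱ) := mul_nonneg (by positivity) (by linarith)
    linarith
  rw [hdet, abs_neg, abs_of_nonneg hrhs]
end

section
/- Let L ⊂ ℝⁿ be a lattice and T : L → ℤ a nontrivial linear map. Then L has a basis w₁,…,wₙ that is rigid with respect to T, i.e., T(w₁) = T(w₂) = ⋯ = T(wₙ), and this common value generates the image of T. -/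
set_option maxHeartbeats 1000000
set_option synthInstance.maxHeartbeats 100000


theorem stmt_19 (n : ℕ) (hn : 1 ≤ n) (L : Submodule ℤ (Fin n → ℝ))
    (b : Module.Basis (Fin n) ℤ L) (T : L →ₗ[ℤ] ℤ) (hT : T ≠ 0) :
    ∃ (w : Module.Basis (Fin n) ℤ L) (t : ℤ),
      (∀ i, T (w i) = t) ∧ LinearMap.range T = Submodule.span ℤ {t} := by
  classical
  -- generator of the range
  obtain ⟨t, ht⟩ := (inferInstance : (LinearMap.range T).IsPrincipal)
  have ht' : LinearMap.range T = Submodule.span ℤ {t} := ht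
  have ht0 : t ≠ 0 := by
    rintro rfl
    apply hT
    ext x
    have : T x ∈ LinearMap.range T := ⟨x, rfl⟩
    rw [ht', Submodule.span_zero_singleton] at this
    simpa using this
  have hdvd : ∀ x : L, t ∣ T x := by
    intro x
    have : T x ∈ LinearMap.range T := ⟨x, rfl⟩
    rw [ht'] at this
    exact (Submodule.mem_span_singleton.mp this).imp fun c hc => by rw [← hc, smul_eq_mul, mul_comm]
  -- divided map T'
  let T' : L →ₗ[ℤ] ℤ :=
    { toFun := fun x => T x / t
      map_add' := by
        intro x y
        obtain ⟨c, hc⟩ := hdvd x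
        obtain ⟨d, hd⟩ := hdvd y
        simp [hc, hd, ← mul_add, Int.mul_ediv_cancel_left _ ht0]
      map_smul' := by
        intro m x
        obtain ⟨c, hc⟩ := hdvd x
        simp [hc, Int.mul_ediv_cancel_left _ ht0, mul_left_comm, mul_comm] }
  have hTT' : ∀ x : L, T x = t * T' x := by
    intro x
    obtain ⟨c, hc⟩ := hdvd x
    simp [T', hc, Int.mul_ediv_cancel_left _ ht0]
  have hsurj : Function.Surjective T' := by
    have htmem : t ∈ LinearMap.range T := by
      rw [ht']; exact Submodule.mem_span_singleton_self t
    obtain ⟨x, hx⟩ := htmem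
    have hx1 : T' x = 1 := by
      have := hTT' x
      rw [hx] at this
      have : t * 1 = t * T' x := by linarith
      exact (mul_left_cancel₀ ht0 this).symm
    intro m
    exact ⟨m • x, by simp [hx1]⟩
  -- splitting
  obtain ⟨s, hs⟩ := Module.projective_lifting_property T' LinearMap.id hsurj
  have hsT' : ∀ m : ℤ, T' (s m) = m := fun m => by simpa using LinearMap.ext_iff.mp hs m
  have hsinj : Function.Injective s := by
    intro a b hab
    have := hsT' a
    rw [hab, hsT'] at this
    exact this.symm
  -- projection onto range s with kernel ker T'
  let f : L →ₗ[ℤ] LinearMap.range s :=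
    (s.comp T').codRestrict _ (fun x => ⟨T' x, rfl⟩)
  have hproj : ∀ x : LinearMap.range s, f x = x := by
    rintro ⟨x, m, rfl⟩
    apply Subtype.ext
    show s (T' (s m)) = s m; rw [hsT']
  have hcompl : IsCompl (LinearMap.range s) (LinearMap.ker f) :=
    LinearMap.isCompl_of_proj hproj
  have hkerT : ∀ x : L, x ∈ LinearMap.ker f ↔ T' x = 0 := by
    intro x
    constructor
    · intro hx
      have : s (T' x) = 0 := by
        have := congrArg Subtype.val hx
        exact this
      have h0 : s (T' x) = s 0 := by simpa using this
      exact hsinj h0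
    · intro hx
      apply Subtype.ext
      show s (T' x) = 0; rw [hx, map_zero]
  -- basis of the kernel
  obtain ⟨m, c⟩ := Submodule.basisOfPid b (LinearMap.ker f)
  -- instances
  haveI : Module.Finite ℤ L := Module.Finite.of_basis b
  haveI : IsNoetherian ℤ L := inferInstance
  -- count: m + 1 = n
  let e2 : ℤ ≃ₗ[ℤ] LinearMap.range s := LinearEquiv.ofInjective s hsinj
  haveI : Module.Free ℤ (LinearMap.ker f) := Module.Free.of_basis c
  haveI : Module.Finite ℤ (LinearMap.ker f) := Module.Finite.of_basis c
  haveI : Module.Free ℤ (LinearMap.range s) := Module.Free.of_equiv e2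
  haveI : Module.Finite ℤ (LinearMap.range s) := Module.Finite.equiv e2
  have hcard : m + 1 = n := by
    have e : (LinearMap.range s × LinearMap.ker f) ≃ₗ[ℤ] L :=
      Submodule.prodEquivOfIsCompl _ _ hcompl
    have h1 : Module.finrank ℤ L = n := by
      rw [Module.finrank_eq_card_basis b, Fintype.card_fin]
    have h2 : Module.finrank ℤ (LinearMap.ker f) = m := by
      rw [Module.finrank_eq_card_basis c, Fintype.card_fin]
    have h3 : Module.finrank ℤ (LinearMap.range s) = 1 := by
      rw [← e2.finrank_eq, Module.finrank_self]
    have h4 : Module.finrank ℤ (LinearMap.range s × LinearMap.ker f) = Module.finrank ℤ L :=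
      e.finrank_eq
    rw [Module.finrank_prod, h1, h2, h3] at h4
    omega
  -- basis of range s
  let c1 : Module.Basis (Fin 1) ℤ (LinearMap.range s) := (Module.Basis.singleton (Fin 1) ℤ).map e2
  -- combined basis of L
  let e : (LinearMap.range s × LinearMap.ker f) ≃ₗ[ℤ] L :=
    Submodule.prodEquivOfIsCompl _ _ hcompl
  let σ : (Fin 1 ⊕ Fin m) ≃ Fin n := finSumFinEquiv.trans (finCongr (by omega))
  let u : Module.Basis (Fin n) ℤ L := ((c1.prod c).map e).reindex σ
  set j0 : Fin n := σ (Sum.inl 0) with hj0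
  have hu : ∀ i : Fin n, T (u i) = if i = j0 then t else 0 := by
    intro i
    rcases σ.surjective i with ⟨k, rfl⟩
    have hval : u (σ k) = e ((c1.prod c) k) := by
      simp [u, Module.Basis.reindex_apply]
    rcases k with k | k
    · obtain rfl : k = 0 := Subsingleton.elim _ _
      rw [hval]
      have : (c1.prod c) (Sum.inl 0) = (c1 0, 0) := by
        ext
        · simp
        · simp
      rw [this]
      have he : e ((c1 0), (0 : LinearMap.ker f)) = (c1 0 : L) := by
        simp [e, Submodule.coe_prodEquivOfIsCompl]
      rw [he]
      have hc1 : (c1 0 : L) = s 1 := by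
        have h1 : c1 0 = e2 1 := by simp [c1]
        rw [h1]
        show ((LinearEquiv.ofInjective s hsinj) 1 : L) = s 1
        simp [LinearEquiv.ofInjective_apply]
      rw [if_pos rfl, hc1, hTT', hsT', mul_one]
    · rw [hval]
      have : (c1.prod c) (Sum.inr k) = (0, c k) := by
        ext
        · simp
        · simp
      rw [this]
      have he : e ((0 : LinearMap.range s), c k) = (c k : L) := by
        simp [e, Submodule.coe_prodEquivOfIsCompl]
      rw [he]
      have hne : σ (Sum.inr k) ≠ j0 := by
        rw [hj0]
        intro h
        exact Sum.inr_ne_inl (σ.injective h)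
      rw [if_neg hne]
      have hk0 : T' (c k : L) = 0 := (hkerT _).mp (c k).2
      rw [hTT', hk0, mul_zero]
  -- shear automorphism: u i ↦ u i + u j0 for i ≠ j0
  let vf : Fin n → L := fun i => if i = j0 then u j0 else u i + u j0
  let vg : Fin n → L := fun i => if i = j0 then u j0 else u i - u j0
  let f1 : L →ₗ[ℤ] L := u.constr ℤ vf
  let g1 : L →ₗ[ℤ] L := u.constr ℤ vg
  have hcf : ∀ i, f1 (u i) = vf i := fun i => u.constr_basis ℤ vf i
  have hcg : ∀ i, g1 (u i) = vg i := fun i => u.constr_basis ℤ vg i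
  have hfj : f1 (u j0) = u j0 := by rw [hcf]; simp [vf]
  have hgj : g1 (u j0) = u j0 := by rw [hcg]; simp [vg]
  have hfg : f1.comp g1 = LinearMap.id := by
    apply u.ext
    intro i
    rw [LinearMap.comp_apply, LinearMap.id_apply]
    by_cases h : i = j0
    · subst h; rw [hgj, hfj]
    · rw [hcg]
      simp only [vg, if_neg h]
      rw [map_sub, hfj, hcf]
      simp only [vf, if_neg h]
      abel
  have hgf : g1.comp f1 = LinearMap.id := by
    apply u.ext
    intro i
    rw [LinearMap.comp_apply, LinearMap.id_apply]
    by_cases h : i = j0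
    · subst h; rw [hfj, hgj]
    · rw [hcf]
      simp only [vf, if_neg h]
      rw [map_add, hgj, hcg]
      simp only [vg, if_neg h]
      abel
  let eaut : L ≃ₗ[ℤ] L := LinearEquiv.ofLinear f1 g1 hfg hgf
  refine ⟨u.map eaut, t, ?_, ht'⟩
  intro i
  have : (u.map eaut) i = f1 (u i) := by simp [eaut, Module.Basis.map_apply]
  rw [this]
  by_cases h : i = j0
  · subst h
    rw [hfj, hu, if_pos rfl]
  · rw [hcf]
    simp only [vf, if_neg h]
    rw [map_add, hu, hu, if_neg h, if_pos rfl, zero_add]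
end
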